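/- arXiv:2102.08149 — 5 statements merged into one kernel-verified Lean document; each statement's English description precedes it below -/
import Mathlib

section
/- Fix a ∈ (0, π) and a function q : ℝ → ℂ, square-integrable on (0, π), with q(x) = 0 for all x outside (a, π). Fix ρ ∈ ℂ, ρ ≠ 0, and set λ = ρ². For ν ∈ {0,1} let y_{0,0}(x,λ) = cos(ρx), y_{1,0}(x,λ) = sin(ρx)/ρ, and recursively y_{ν,k}(x,λ) = ∫_a^x (sin ρ(x−t)/ρ) q(t) y_{ν,k−1}(t−a, λ) dt for k ≥ 1. Then, for every ν ∈ {0,1}, every k ≥ 1 and every x with 0 ≤ x ≤ min(ka, π), one has y_{ν,k}(x,λ) = 0. -/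
open MeasureTheory Set
open scoped Real

noncomputable def y0 (ρ : ℂ) (ν : ℕ) (x : ℝ) : ℂ :=
  if ν = 0 then Complex.cos (ρ * (x : ℂ)) else Complex.sin (ρ * (x : ℂ)) / ρ

noncomputable def ySeq (a : ℝ) (q : ℝ → ℂ) (ρ : ℂ) (ν : ℕ) : ℕ → ℝ → ℂ
  | 0 => y0 ρ ν
  | k + 1 => fun x => ∫ t in a..x,
      (Complex.sin (ρ * ((x - t : ℝ) : ℂ)) / ρ) * q t * ySeq a q ρ ν k (t - a)

theorem statement0
    (a : ℝ) (ha : a ∈ Set.Ioo 0 π)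
    (q : ℝ → ℂ)
    (hq2 : MemLp q 2 (volume.restrict (Set.Ioo 0 π)))
    (hq0 : ∀ x : ℝ, x ∉ Set.Ioo a π → q x = 0)
    (ρ : ℂ) (hρ : ρ ≠ 0) (lam : ℂ) (hlam : lam = ρ ^ 2) :
    ∀ ν : ℕ, (ν = 0 ∨ ν = 1) → ∀ k : ℕ, 1 ≤ k →
      ∀ x : ℝ, 0 ≤ x → x ≤ min (k * a) π → ySeq a q ρ ν k x = 0 := by
  obtain ⟨ha0, haπ⟩ := ha
  intro ν hν k
  induction k with
  | zero => omega
  | succ k ih =>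
    intro _ x hx0 hx
    have hxa : x ≤ (k + 1 : ℕ) * a := le_trans hx (min_le_left _ _)
    have hxπ : x ≤ π := le_trans hx (min_le_right _ _)
    show (∫ t in a..x,
        (Complex.sin (ρ * ((x - t : ℝ) : ℂ)) / ρ) * q t * ySeq a q ρ ν k (t - a)) = 0
    have heq : Set.EqOn (fun t : ℝ =>
        (Complex.sin (ρ * ((x - t : ℝ) : ℂ)) / ρ) * q t * ySeq a q ρ ν k (t - a))
        (fun _ => (0 : ℂ)) (Set.uIcc a x) := by
      intro t ht
      rcases le_or_gt t a with hta | hta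
      · have : q t = 0 := hq0 t (by simp only [Set.mem_Ioo]; push_neg; intro h; linarith)
        simp [this]
      · -- a < t, so t ≤ x
        have htx : t ≤ x := by
          rcases le_total x a with h | h
          · exfalso
            have : t ≤ a := by
              have := ht.2
              simpa [Set.uIcc, max_eq_left h] using this
            linarith
          · have := ht.2
            simpa [Set.uIcc, max_eq_right h] using this
        rcases Nat.eq_zero_or_pos k with rfl | hk1
        · exfalso
          have : x ≤ a := by
            have := hxa
            push_cast at this
            linarith
          linarith
        · have hz : ySeq a q ρ ν k (t - a) = 0 := by
            apply ih hk1 (t - a) (by linarith)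
            refine le_min ?_ ?_
            · have : (k : ℝ) + 1 = ((k + 1 : ℕ) : ℝ) := by push_cast; ring
              have hxa' : x ≤ (k : ℝ) * a + a := by
                calc x ≤ ((k + 1 : ℕ) : ℝ) * a := hxa
                _ = (k : ℝ) * a + a := by push_cast; ring
              linarith
            · linarith
          simp [hz]
    rw [intervalIntegral.integral_congr heq]
    simp
end

section
/- Fix a ∈ (0, π/3) and a function q : ℝ → ℂ, square-integrable on (0, π), with q(x) = 0 for all x outside (a, π) and q(x) = 0 for almost every x ∈ (3a, π). Fix ρ ∈ ℂ, ρ ≠ 0, λ = ρ². For ν ∈ {0,1} let y_{0,0}(x,λ) = cos(ρx), y_{1,0}(x,λ) = sin(ρx)/ρ, and y_{ν,k}(x,λ) = ∫_a^x (sin ρ(x−t)/ρ) q(t) y_{ν,k−1}(t−a, λ) dt for k ≥ 1. Then y_{ν,3}(x,λ) = 0 for all x ∈ [0, π], and consequently the function Y_ν(x,λ) := y_{ν,0}(x,λ) + y_{ν,1}(x,λ) + y_{ν,2}(x,λ) satisfies the Volterra integral equation Y_ν(x,λ) = y_{ν,0}(x,λ) + ∫_a^x (sin ρ(x−t)/ρ)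 q(t) Y_ν(t−a, λ) dt for all x ∈ [0, π]. -/
open MeasureTheory Set
open scoped Real

noncomputable def Yfun (a : ℝ) (q : ℝ → ℂ) (ρ : ℂ) (ν : ℕ) (x : ℝ) : ℂ :=
  ySeq a q ρ ν 0 x + ySeq a q ρ ν 1 x + ySeq a q ρ ν 2 x

lemma ySeq_succ (a : ℝ) (q : ℝ → ℂ) (ρ : ℂ) (ν k : ℕ) (x : ℝ) :
    ySeq a q ρ ν (k + 1) x = ∫ t in a..x,
      (Complex.sin (ρ * ((x - t : ℝ) : ℂ)) / ρ) * q t * ySeq a q ρ ν k (t - a) := rfl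

lemma y0_continuous (ρ : ℂ) (ν : ℕ) : Continuous (y0 ρ ν) := by
  unfold y0
  split
  · exact Complex.continuous_cos.comp (by fun_prop)
  · exact (Complex.continuous_sin.comp (by fun_prop)).div_const ρ

lemma q_integrable {a : ℝ} (ha : 0 < a) {q : ℝ → ℂ}
    (hq2 : MemLp q 2 (volume.restrict (Set.Ioo 0 π)))
    (hq0 : ∀ x : ℝ, x ∉ Set.Ioo a π → q x = 0) : Integrable q (volume : Measure ℝ) := by
  haveI : IsFiniteMeasure (volume.restrict (Set.Ioo 0 π)) := by
    constructor
    rw [Measure.restrict_apply_univ]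
    exact measure_Ioo_lt_top
  have h1 : IntegrableOn q (Set.Ioo 0 π) volume :=
    hq2.integrable (by norm_num)
  have hqi : q = Set.indicator (Set.Ioo 0 π) q := by
    funext x
    by_cases hx : x ∈ Set.Ioo 0 π
    · simp [hx]
    · have : x ∉ Set.Ioo a π := fun hmem => hx ⟨lt_trans ha hmem.1, hmem.2⟩
      simp [hx, hq0 x this]
  rw [hqi]
  exact h1.integrable_indicator measurableSet_Ioo

/-- product of a continuous function, `q`, and a continuous function is interval integrable. -/
lemma builder {q : ℝ → ℂ} (hq : Integrable q (volume : Measure ℝ))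
    {g h : ℝ → ℂ} (hg : Continuous g) (hh : Continuous h) (b c : ℝ) :
    IntervalIntegrable (fun t => g t * q t * h t) volume b c :=
  ((hq.intervalIntegrable).continuousOn_mul hg.continuousOn).mul_continuousOn hh.continuousOn

lemma ySeq1_zero {a : ℝ} {q : ℝ → ℂ} (ρ : ℂ) (ν : ℕ)
    (hq0 : ∀ x : ℝ, x ∉ Set.Ioo a π → q x = 0) {w : ℝ} (hw : w ≤ a) :
    ySeq a q ρ ν 1 w = 0 := by
  rw [ySeq_succ]
  rw [intervalIntegral.integral_congr (g := fun _ => (0 : ℂ)), intervalIntegral.integral_zero]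
  intro u hu
  have hua : u ≤ a := by
    rcases Set.mem_uIcc.mp hu with h | h
    · exact le_trans h.2 hw
    · exact h.2
  have hqu : q u = 0 := hq0 u (fun hmem => absurd hmem.1 (not_lt.mpr hua))
  simp [hqu]

lemma ySeq2_zero {a : ℝ} {q : ℝ → ℂ} (ρ : ℂ) (ν : ℕ) (ha : 0 < a)
    (hq0 : ∀ x : ℝ, x ∉ Set.Ioo a π → q x = 0) {s : ℝ} (hs : s ≤ 2 * a) :
    ySeq a q ρ ν 2 s = 0 := by
  rw [ySeq_succ]
  rw [intervalIntegral.integral_congr (g := fun _ => (0 : ℂ)), intervalIntegral.integral_zero]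
  intro u hu
  by_cases h : u ≤ a
  · have hqu : q u = 0 := hq0 u (fun hmem => absurd hmem.1 (not_lt.mpr h))
    simp [hqu]
  · have h1 : ySeq a q ρ ν 1 (u - a) = 0 := by
      have hua : u ≤ 2 * a := by
        rcases Set.mem_uIcc.mp hu with h' | h'
        · exact le_trans h'.2 hs
        · exact le_trans h'.2 (by linarith)
      exact ySeq1_zero ρ ν hq0 (by linarith)
    simp [h1]

lemma ySeq3_zero {a : ℝ} {q : ℝ → ℂ} (ρ : ℂ) (ν : ℕ) (ha : a ∈ Set.Ioo 0 (π / 3))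
    (hq0 : ∀ x : ℝ, x ∉ Set.Ioo a π → q x = 0)
    (hq3 : ∀ᵐ x ∂(volume.restrict (Set.Ioo (3 * a) π)), q x = 0)
    {x : ℝ} (hx : x ∈ Set.Icc (0 : ℝ) π) :
    ySeq a q ρ ν 3 x = 0 := by
  have hq3' : ∀ᵐ t ∂(volume : Measure ℝ), t ∈ Set.Ioo (3 * a) π → q t = 0 :=
    (ae_restrict_iff' measurableSet_Ioo).mp hq3
  rw [ySeq_succ]
  rw [intervalIntegral.integral_congr_ae (g := fun _ => (0 : ℂ)), intervalIntegral.integral_zero]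
  filter_upwards [hq3'] with t ht htI
  by_cases h3 : t ≤ 3 * a
  · have h2 : ySeq a q ρ ν 2 (t - a) = 0 := ySeq2_zero ρ ν ha.1 hq0 (by linarith)
    simp [h2]
  · push_neg at h3
    have htle : t ≤ π := by
      have hmax : t ≤ max a x := (Set.mem_uIoc.mp htI).elim
        (fun h => le_trans h.2 (le_max_right a x))
        (fun h => le_trans h.2 (le_max_left a x))
      exact le_trans hmax (max_le (by linarith [ha.2, Real.pi_pos]) hx.2)
    have hqt : q t = 0 := by
      rcases lt_or_eq_of_le htle with h | h
      · exact ht ⟨h3, h⟩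
      · exact hq0 t (by simp [h])
    simp [hqt]

lemma ySeq1_continuous {a : ℝ} {q : ℝ → ℂ} (ρ : ℂ) (ν : ℕ)
    (hq : Integrable q (volume : Measure ℝ)) :
    Continuous (ySeq a q ρ ν 1) := by
  have hcos : Continuous fun u : ℝ => Complex.cos (ρ * (u : ℂ)) :=
    Complex.continuous_cos.comp (by fun_prop)
  have hsin : Continuous fun u : ℝ => Complex.sin (ρ * (u : ℂ)) :=
    Complex.continuous_sin.comp (by fun_prop)
  have hg1 : ∀ b c : ℝ, IntervalIntegrable
      (fun u => Complex.cos (ρ * (u : ℂ)) * q u * y0 ρ ν (u - a)) volume b c :=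
    fun b c => builder hq hcos ((y0_continuous ρ ν).comp (by fun_prop)) b c
  have hg2 : ∀ b c : ℝ, IntervalIntegrable
      (fun u => Complex.sin (ρ * (u : ℂ)) * q u * y0 ρ ν (u - a)) volume b c :=
    fun b c => builder hq hsin ((y0_continuous ρ ν).comp (by fun_prop)) b c
  have key : ∀ s : ℝ, ySeq a q ρ ν 1 s =
      (Complex.sin (ρ * (s : ℂ)) / ρ) *
        (∫ u in a..s, Complex.cos (ρ * (u : ℂ)) * q u * y0 ρ ν (u - a))
      - (Complex.cos (ρ * (s : ℂ)) / ρ) *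
        (∫ u in a..s, Complex.sin (ρ * (u : ℂ)) * q u * y0 ρ ν (u - a)) := by
    intro s
    rw [ySeq_succ]
    rw [← intervalIntegral.integral_const_mul, ← intervalIntegral.integral_const_mul,
        ← intervalIntegral.integral_sub ((hg1 a s).const_mul _) ((hg2 a s).const_mul _)]
    apply intervalIntegral.integral_congr
    intro u _
    show Complex.sin (ρ * ((s - u : ℝ) : ℂ)) / ρ * q u * y0 ρ ν (u - a) = _
    have hcast : (((s - u : ℝ) : ℂ)) = (s : ℂ) - (u : ℂ) := by push_cast; ring
    rw [hcast, mul_sub, Complex.sin_sub]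
    ring
  rw [funext key]
  exact ((hsin.div_const ρ).mul (intervalIntegral.continuous_primitive hg1 a)).sub
    ((hcos.div_const ρ).mul (intervalIntegral.continuous_primitive hg2 a))

theorem statement1
    (a : ℝ) (ha : a ∈ Set.Ioo 0 (π / 3))
    (q : ℝ → ℂ)
    (hq2 : MemLp q 2 (volume.restrict (Set.Ioo 0 π)))
    (hq0 : ∀ x : ℝ, x ∉ Set.Ioo a π → q x = 0)
    (hq3 : ∀ᵐ x ∂(volume.restrict (Set.Ioo (3 * a) π)), q x = 0)
    (ρ : ℂ) (hρ : ρ ≠ 0) (lam : ℂ) (hlam : lam = ρ ^ 2) :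
    ∀ ν : ℕ, (ν = 0 ∨ ν = 1) →
      (∀ x ∈ Set.Icc (0 : ℝ) π, ySeq a q ρ ν 3 x = 0) ∧
      (∀ x ∈ Set.Icc (0 : ℝ) π,
        Yfun a q ρ ν x = y0 ρ ν x + ∫ t in a..x,
          (Complex.sin (ρ * ((x - t : ℝ) : ℂ)) / ρ) * q t * Yfun a q ρ ν (t - a)) := by
  intro ν _
  have hq : Integrable q (volume : Measure ℝ) := q_integrable ha.1 hq2 hq0
  refine ⟨fun x hx => ySeq3_zero ρ ν ha hq0 hq3 hx, fun x hx => ?_⟩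
  have hker : Continuous fun t : ℝ => Complex.sin (ρ * ((x - t : ℝ) : ℂ)) / ρ := by
    apply Continuous.div_const
    exact Complex.continuous_sin.comp (by fun_prop)
  have hf1 : IntervalIntegrable
      (fun t => (Complex.sin (ρ * ((x - t : ℝ) : ℂ)) / ρ) * q t * ySeq a q ρ ν 0 (t - a))
      volume a x :=
    builder hq hker ((y0_continuous ρ ν).comp (by fun_prop)) a x
  have hf2 : IntervalIntegrable
      (fun t => (Complex.sin (ρ * ((x - t : ℝ) : ℂ)) / ρ) * q t * ySeq a q ρ ν 1 (t - a))
      volume a x :=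
    builder hq hker ((ySeq1_continuous ρ ν hq).comp (by fun_prop)) a x
  -- the third summand is a.e. zero on the interval
  have hq3' : ∀ᵐ t ∂(volume : Measure ℝ), t ∈ Set.Ioo (3 * a) π → q t = 0 :=
    (ae_restrict_iff' measurableSet_Ioo).mp hq3
  have h3ae : ∀ᵐ t ∂(volume : Measure ℝ), t ∈ Set.uIoc a x →
      (Complex.sin (ρ * ((x - t : ℝ) : ℂ)) / ρ) * q t * ySeq a q ρ ν 2 (t - a) = 0 := by
    filter_upwards [hq3'] with t ht htI
    by_cases h3 : t ≤ 3 * a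
    · have h2 : ySeq a q ρ ν 2 (t - a) = 0 := ySeq2_zero ρ ν ha.1 hq0 (by linarith)
      simp [h2]
    · push_neg at h3
      have htle : t ≤ π := by
        have hmax : t ≤ max a x := (Set.mem_uIoc.mp htI).elim
          (fun h => le_trans h.2 (le_max_right a x))
          (fun h => le_trans h.2 (le_max_left a x))
        exact le_trans hmax (max_le (by linarith [ha.2, Real.pi_pos]) hx.2)
      have hqt : q t = 0 := by
        rcases lt_or_eq_of_le htle with h | h
        · exact ht ⟨h3, h⟩
        · exact hq0 t (by simp [h])
      simp [hqt]
  have hf3 : IntervalIntegrable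
      (fun t => (Complex.sin (ρ * ((x - t : ℝ) : ℂ)) / ρ) * q t * ySeq a q ρ ν 2 (t - a))
      volume a x := by
    rw [intervalIntegrable_iff]
    apply (integrable_zero _ _ _).congr
    exact Filter.EventuallyEq.symm <| (ae_restrict_iff' measurableSet_uIoc).mpr h3ae
  have hsplit : (∫ t in a..x,
      (Complex.sin (ρ * ((x - t : ℝ) : ℂ)) / ρ) * q t * Yfun a q ρ ν (t - a)) =
      (∫ t in a..x, (Complex.sin (ρ * ((x - t : ℝ) : ℂ)) / ρ) * q t * ySeq a q ρ ν 0 (t - a))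
      + (∫ t in a..x, (Complex.sin (ρ * ((x - t : ℝ) : ℂ)) / ρ) * q t * ySeq a q ρ ν 1 (t - a))
      + (∫ t in a..x, (Complex.sin (ρ * ((x - t : ℝ) : ℂ)) / ρ) * q t * ySeq a q ρ ν 2 (t - a)) := by
    rw [← intervalIntegral.integral_add hf1 hf2, ← intervalIntegral.integral_add (hf1.add hf2) hf3]
    apply intervalIntegral.integral_congr
    intro u _
    show Complex.sin (ρ * ((x - u : ℝ) : ℂ)) / ρ * q u * Yfun a q ρ ν (u - a) = _
    simp only [Yfun]
    ring
  have h3int : (∫ t in a..x,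
      (Complex.sin (ρ * ((x - t : ℝ) : ℂ)) / ρ) * q t * ySeq a q ρ ν 2 (t - a)) = 0 := by
    rw [← ySeq_succ]
    exact ySeq3_zero ρ ν ha hq0 hq3 hx
  rw [hsplit, h3int, ← ySeq_succ, ← ySeq_succ]
  show Yfun a q ρ ν x = ySeq a q ρ ν 0 x + (ySeq a q ρ ν 1 x + ySeq a q ρ ν 2 x + 0)
  simp only [Yfun]
  ring
end

section
/- Fix a ∈ (0, π) and a function q : ℝ → ℂ, square-integrable on (0, π), with q(x) = 0 for all x outside (a, π). Fix ρ ∈ ℂ, ρ ≠ 0, λ = ρ². For ν ∈ {0,1} let y_{0,0}(x,λ) = cos(ρx), y_{1,0}(x,λ) = sin(ρx)/ρ, and y_{ν,k}(x,λ) = ∫_a^x (sin ρ(x−t)/ρ) q(t) y_{ν,k−1}(t−a, λ) dt for k = 1, 2. For ν ∈ {0,1} define P_ν(x,t) = (∫_{t+a/2}^{x} q(τ) dτ)(∫_a^{t−a/2} q(ξ) dξ) + (−1)^ν ∫_a^{x−t+a/2} q(τ) (∫_{t+τ−a/2}^{x} q(ξ) dξ) dτ, for 3a/2 ≤ t ≤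 x − a/2 ≤ π − a/2. Then for every ν ∈ {0,1} and every x with 2a ≤ x ≤ π: y_{ν,2}(x,λ) = (1/(2λ^ν)) ∫_{3a/2}^{x−a/2} P_ν(x,t) y_{1−ν,0}(x−2t+a, λ) dt. -/
open MeasureTheory Set
open scoped Real

noncomputable def Pfun (a : ℝ) (q : ℝ → ℂ) (ν : ℕ) (x t : ℝ) : ℂ :=
  (∫ τ in (t + a / 2)..x, q τ) * (∫ ξ in a..(t - a / 2), q ξ)
    + (-1) ^ ν * ∫ τ in a..(x - t + a / 2), q τ * (∫ ξ in (t + τ - a / 2)..x, q ξ)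

namespace S3


/-- interval integral to indicator integral -/
lemma interval_to_indicator (g : ℝ → ℂ) {l m : ℝ} (h : l ≤ m) :
    ∫ r in l..m, g r = ∫ r, (Ioo l m).indicator g r := by
  rw [intervalIntegral.integral_of_le h, integral_Ioc_eq_integral_Ioo,
    integral_indicator measurableSet_Ioo]

lemma one_side (f : ℝ → ℝ → ℂ) (c d : ℝ) (φ ψ : ℝ → ℝ) (hcd : c ≤ d)
    (h1 : ∀ u ∈ Ioo c d, φ u ≤ ψ u ∨ ∀ s ∈ uIcc (φ u) (ψ u), f u s = 0) :
    ∫ u in c..d, ∫ s in φ u..ψ u, f u s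
      = ∫ u, ∫ s,
          ({p : ℝ × ℝ | p.1 ∈ Ioo c d ∧ p.2 ∈ Ioo (φ p.1) (ψ p.1)}.indicator
            (fun p => f p.1 p.2)) (u, s) := by
  classical
  rw [intervalIntegral.integral_of_le hcd, integral_Ioc_eq_integral_Ioo]
  have step1 : ∫ u in Ioo c d, (∫ s in φ u..ψ u, f u s)
      = ∫ u in Ioo c d, (∫ s, (Ioo (φ u) (ψ u)).indicator (f u) s) := by
    refine setIntegral_congr_fun measurableSet_Ioo (fun u hu => ?_)
    rcases h1 u hu with hle | hz
    · exact interval_to_indicator (f u) hle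
    · rcases le_or_gt (φ u) (ψ u) with hle | hlt
      · rw [interval_to_indicator (f u) hle]
      · have e1 : ∫ s in φ u..ψ u, f u s = 0 := by
          rw [intervalIntegral.integral_congr (g := fun _ => 0) (fun s hs => hz s hs)]
          simp
        have e2 : Ioo (φ u) (ψ u) = (∅ : Set ℝ) := Ioo_eq_empty (not_lt.2 hlt.le)
        rw [e1, e2]; simp
  rw [step1, ← integral_indicator measurableSet_Ioo]
  congr 1
  funext u
  by_cases hu : u ∈ Ioo c d
  · rw [Set.indicator_of_mem hu]
    congr 1
    funext s
    by_cases hs : s ∈ Ioo (φ u) (ψ u)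
    · rw [Set.indicator_of_mem hs, Set.indicator_of_mem (show (u,s) ∈ {p : ℝ × ℝ | p.1 ∈ Ioo c d ∧ p.2 ∈ Ioo (φ p.1) (ψ p.1)} from ⟨hu, hs⟩)]
    · rw [Set.indicator_of_notMem hs,
        Set.indicator_of_notMem (fun hmem => hs hmem.2)]
  · rw [Set.indicator_of_notMem hu]
    have h0 : ∀ s : ℝ, ({p : ℝ × ℝ | p.1 ∈ Ioo c d ∧ p.2 ∈ Ioo (φ p.1) (ψ p.1)}.indicator
        (fun p => f p.1 p.2)) (u, s) = (0:ℂ) :=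
      fun s => Set.indicator_of_notMem (fun hmem => hu hmem.1) _
    simp only [h0, integral_zero]

lemma master_swap (f : ℝ → ℝ → ℂ) (c1 d1 c2 d2 : ℝ) (φ1 ψ1 φ2 ψ2 : ℝ → ℝ)
    (hc1 : c1 ≤ d1) (hc2 : c2 ≤ d2)
    (h1 : ∀ u ∈ Ioo c1 d1, φ1 u ≤ ψ1 u ∨ ∀ s ∈ uIcc (φ1 u) (ψ1 u), f u s = 0)
    (h2 : ∀ s ∈ Ioo c2 d2, φ2 s ≤ ψ2 s ∨ ∀ u ∈ uIcc (φ2 s) (ψ2 s), f u s = 0)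
    (hregion : ∀ u s, (u ∈ Ioo c1 d1 ∧ s ∈ Ioo (φ1 u) (ψ1 u))
      ↔ (s ∈ Ioo c2 d2 ∧ u ∈ Ioo (φ2 s) (ψ2 s)))
    (hint : Integrable
      ({p : ℝ × ℝ | p.1 ∈ Ioo c1 d1 ∧ p.2 ∈ Ioo (φ1 p.1) (ψ1 p.1)}.indicator
        (fun p => f p.1 p.2)) (volume : Measure (ℝ × ℝ))) :
    ∫ u in c1..d1, ∫ s in φ1 u..ψ1 u, f u s
      = ∫ s in c2..d2, ∫ u in φ2 s..ψ2 s, f u s := by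
  rw [one_side f c1 d1 φ1 ψ1 hc1 h1, one_side (fun s u => f u s) c2 d2 φ2 ψ2 hc2 h2]
  have hswap : ∫ u, ∫ s,
      ({p : ℝ × ℝ | p.1 ∈ Ioo c1 d1 ∧ p.2 ∈ Ioo (φ1 p.1) (ψ1 p.1)}.indicator
        (fun p => f p.1 p.2)) (u, s)
      = ∫ s, ∫ u,
      ({p : ℝ × ℝ | p.1 ∈ Ioo c1 d1 ∧ p.2 ∈ Ioo (φ1 p.1) (ψ1 p.1)}.indicator
        (fun p => f p.1 p.2)) (u, s) := by
    apply MeasureTheory.integral_integral_swap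
    rw [← Measure.volume_eq_prod] at *
    exact hint
  rw [hswap]
  congr 1
  funext s
  congr 1
  funext u
  by_cases h : u ∈ Ioo c1 d1 ∧ s ∈ Ioo (φ1 u) (ψ1 u)
  · rw [Set.indicator_of_mem (by exact h), Set.indicator_of_mem (by exact (hregion u s).1 h)]
  · rw [Set.indicator_of_notMem (by exact h), Set.indicator_of_notMem
      (by intro hc; exact h ((hregion u s).2 hc))]

lemma int_indicator_mul (c d : ℝ → ℂ) (hc : Integrable c volume) (hd : Integrable d volume)
    (e : ℝ × ℝ → ℂ) (he : Continuous e) (S : Set (ℝ × ℝ)) (hS : MeasurableSet S)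
    (b1 b2 b3 b4 : ℝ) (hsub : S ⊆ Icc b1 b2 ×ˢ Icc b3 b4) :
    Integrable (S.indicator (fun p => (c p.1 * d p.2) * e p)) (volume : Measure (ℝ × ℝ)) := by
  obtain ⟨C, hC⟩ := (isCompact_Icc.prod isCompact_Icc).exists_bound_of_continuousOn
      (f := e) he.continuousOn
  set C' := max C 0 with hC'def
  have hC'0 : (0:ℝ) ≤ C' := le_max_right _ _
  have hCe : ∀ p ∈ S, ‖e p‖ ≤ C' := fun p hp => (hC p (hsub hp)).trans (le_max_left _ _)
  have hmeas : AEStronglyMeasurable (S.indicator (fun p => (c p.1 * d p.2) * e p))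
      (volume : Measure (ℝ × ℝ)) := by
    rw [Measure.volume_eq_prod]
    refine AEStronglyMeasurable.indicator ?_ hS
    exact (hc.1.comp_fst.mul hd.1.comp_snd).mul he.aestronglyMeasurable
  have hg : Integrable (fun p : ℝ × ℝ => C' * (‖c p.1‖ * ‖d p.2‖)) volume := by
    rw [Measure.volume_eq_prod]
    exact (hc.norm.mul_prod hd.norm).const_mul C'
  refine hg.mono' hmeas (Filter.Eventually.of_forall (fun p => ?_))
  by_cases hp : p ∈ S
  · rw [Set.indicator_of_mem hp]
    calc ‖c p.1 * d p.2 * e p‖ = ‖c p.1‖ * ‖d p.2‖ * ‖e p‖ := by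
          rw [norm_mul, norm_mul]
      _ ≤ ‖c p.1‖ * ‖d p.2‖ * C' := by
          exact mul_le_mul_of_nonneg_left (hCe p hp) (by positivity)
      _ = C' * (‖c p.1‖ * ‖d p.2‖) := by ring
  · rw [Set.indicator_of_notMem hp]
    simp only [norm_zero]
    positivity

noncomputable def Qf (a : ℝ) (q : ℝ → ℂ) (r : ℝ) : ℂ := ∫ ξ in a..r, q ξ
noncomputable def Rf (x : ℝ) (q : ℝ → ℂ) (r : ℝ) : ℂ := ∫ τ in r..x, q τ

lemma Qf_cont {a : ℝ} {q : ℝ → ℂ} (hq : Integrable q volume) : Continuous (Qf a q) :=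
  intervalIntegral.continuous_primitive (fun _ _ => hq.intervalIntegrable) a

lemma Rf_cont {x : ℝ} {q : ℝ → ℂ} (hq : Integrable q volume) : Continuous (Rf x q) := by
  have : Rf x q = fun r => -∫ ξ in x..r, q ξ := by
    funext r; rw [Rf, intervalIntegral.integral_symm]
  rw [this]
  exact (intervalIntegral.continuous_primitive (fun _ _ => hq.intervalIntegrable) x).neg

lemma Qf_zero {a π' : ℝ} {q : ℝ → ℂ} (hq0 : ∀ r, r ∉ Ioo a π' → q r = 0) {r : ℝ} (hr : r ≤ a) :
    Qf a q r = 0 := by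
  rw [Qf, intervalIntegral.integral_congr (g := fun _ => 0), intervalIntegral.integral_zero]
  intro ξ hξ
  rw [uIcc_of_ge hr] at hξ
  exact hq0 ξ (fun hmem => absurd hmem.1 (not_lt.2 hξ.2))

lemma measS {c d : ℝ} {φ ψ : ℝ → ℝ} (hφ : Continuous φ) (hψ : Continuous ψ) :
    MeasurableSet {p : ℝ × ℝ | p.1 ∈ Ioo c d ∧ p.2 ∈ Ioo (φ p.1) (ψ p.1)} := by
  have h1 : MeasurableSet {p : ℝ × ℝ | c < p.1} := measurableSet_lt measurable_const measurable_fst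
  have h2 : MeasurableSet {p : ℝ × ℝ | p.1 < d} := measurableSet_lt measurable_fst measurable_const
  have h3 : MeasurableSet {p : ℝ × ℝ | φ p.1 < p.2} :=
    measurableSet_lt (hφ.measurable.comp measurable_fst) measurable_snd
  have h4 : MeasurableSet {p : ℝ × ℝ | p.2 < ψ p.1} :=
    measurableSet_lt measurable_snd (hψ.measurable.comp measurable_fst)
  have hset : {p : ℝ × ℝ | p.1 ∈ Ioo c d ∧ p.2 ∈ Ioo (φ p.1) (ψ p.1)}
      = ({p : ℝ × ℝ | c < p.1} ∩ {p | p.1 < d}) ∩ ({p | φ p.1 < p.2} ∩ {p | p.2 < ψ p.1}) := by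
    ext p; simp only [mem_setOf_eq, mem_Ioo, mem_inter_iff, and_assoc]
  rw [hset]
  exact (h1.inter h2).inter (h3.inter h4)

lemma ind_one_integrable : Integrable ((Icc (0:ℝ) π).indicator (fun _ => (1:ℂ))) volume := by
  rw [integrable_indicator_iff measurableSet_Icc]
  exact integrableOn_const (by rw [Real.volume_Icc]; exact ENNReal.ofReal_ne_top)

section CL
variable {a x : ℝ} {q : ℝ → ℂ} {w W : ℝ → ℂ}

lemma box_one {r : ℝ} (h0 : 0 ≤ r) (h1 : r ≤ π) :
    (Icc (0:ℝ) π).indicator (fun _ => (1:ℂ)) r = 1 :=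
  Set.indicator_of_mem (mem_Icc.2 ⟨h0, h1⟩) _

lemma CL1 (ha : 0 < a) (hax : 2*a ≤ x) (hxπ : x ≤ π) (hq : Integrable q volume)
    (hq0 : ∀ r, r ∉ Ioo a π → q r = 0) (hw : Continuous w)
    (hW : ∀ s, HasDerivAt W (w s) s) :
    (∫ t in a..x, ∫ u in a..(t-a), (q t * q u) * (W (t-a/2) - W (u+a/2)))
      = ∫ s in (3*a/2)..(x-a/2), (Rf x q (s+a/2) * Qf a q (s-a/2)) * w s := by
  have hq0' : ∀ r : ℝ, r ≤ a → q r = 0 := fun r hr =>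
    hq0 r (fun hmem => absurd hmem.1 (not_lt.2 hr))
  have hWd : ∀ l r : ℝ, ∫ s in l..r, w s = W r - W l := fun l r =>
    intervalIntegral.integral_eq_sub_of_hasDerivAt (fun s _ => hW s)
      (hw.intervalIntegrable _ _)
  have hax' : a ≤ x := by linarith
  -- Step A : for each t, swap (u,s)
  have stepA : ∀ t ∈ uIcc a x,
      (∫ u in a..(t-a), (q t * q u) * (W (t-a/2) - W (u+a/2)))
        = ∫ s in (3*a/2)..(t-a/2), (q t * Qf a q (s-a/2)) * w s := by
    intro t ht
    rw [uIcc_of_le hax', mem_Icc] at ht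
    have h1 : (∫ u in a..(t-a), (q t * q u) * (W (t-a/2) - W (u+a/2)))
        = ∫ u in a..(t-a), ∫ s in (u+a/2)..(t-a/2), (q t * q u) * w s := by
      refine intervalIntegral.integral_congr (fun u _ => ?_)
      rw [← hWd (u+a/2) (t-a/2), intervalIntegral.integral_const_mul]
    rw [h1]
    by_cases h2a : 2*a ≤ t
    · -- master swap
      refine master_swap (fun u s => (q t * q u) * w s) a (t-a) (3*a/2) (t-a/2)
        (fun u => u + a/2) (fun _ => t-a/2) (fun _ => a) (fun s => s - a/2)
        (by linarith) (by linarith)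
        (fun u hu => Or.inl (by rw [mem_Ioo] at hu; linarith [hu.2]))
        (fun s hs => Or.inl (by rw [mem_Ioo] at hs; linarith [hs.1]))
        (fun u s => by
          simp only [mem_Ioo]
          constructor
          · rintro ⟨⟨h1, h2⟩, h3, h4⟩
            exact ⟨⟨by linarith, by linarith⟩, by linarith, by linarith⟩
          · rintro ⟨⟨h1, h2⟩, h3, h4⟩
            exact ⟨⟨by linarith, by linarith⟩, by linarith, by linarith⟩) ?_ |>.trans ?_
      · -- integrability
        refine Integrable.congr (int_indicator_mul q ((Icc (0:ℝ) π).indicator (fun _ => (1:ℂ))) hq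
          ind_one_integrable (fun p => q t * w p.2)
          (continuous_const.mul (hw.comp continuous_snd))
          {p : ℝ × ℝ | p.1 ∈ Ioo a (t-a) ∧ p.2 ∈ Ioo (p.1 + a/2) (t - a/2)}
          (measS (continuous_id.add continuous_const) continuous_const) 0 π 0 π ?_)
          (Filter.EventuallyEq.of_eq (Set.indicator_congr (fun p hp => ?_)))
        · rintro p ⟨hp1, hp2⟩
          rw [mem_Ioo] at hp1 hp2
          exact ⟨⟨by linarith [hp1.1], by linarith [hp1.2]⟩,
            ⟨by linarith [hp2.1, hp1.1], by linarith [hp2.2, hp1.2]⟩⟩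
        · obtain ⟨hp1, hp2⟩ := hp
          rw [mem_Ioo] at hp1 hp2
          rw [box_one (by linarith [hp2.1, hp1.1]) (by linarith [hp2.2, hp1.2])]
          ring
      · -- inner integral computation
        refine intervalIntegral.integral_congr (fun s _ => ?_)
        have : (∫ u in a..(s - a/2), (q t * q u) * w s)
            = (∫ u in a..(s - a/2), (q u) * (q t * w s)) := by
          refine intervalIntegral.integral_congr (fun u _ => ?_); ring
        rw [this, intervalIntegral.integral_mul_const]
        rw [Qf]; ring
    · -- degenerate t < 2a : both sides vanish
      push_neg at h2a
      have hL : (∫ u in a..(t-a), ∫ s in (u+a/2)..(t-a/2), (q t * q u) * w s) = 0 := by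
        rw [intervalIntegral.integral_congr (g := fun _ => 0) (fun u hu => ?_),
          intervalIntegral.integral_zero]
        rw [uIcc_of_ge (by linarith)] at hu
        have : q u = 0 := hq0' u hu.2
        simp [this]
      have hR : (∫ s in (3*a/2)..(t-a/2), (q t * Qf a q (s-a/2)) * w s) = 0 := by
        rw [intervalIntegral.integral_congr (g := fun _ => 0) (fun s hs => ?_),
          intervalIntegral.integral_zero]
        rw [uIcc_of_ge (by linarith)] at hs
        have : Qf a q (s - a/2) = 0 := Qf_zero hq0 (by linarith [hs.2])
        simp [this]
      rw [hL, hR]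
  rw [intervalIntegral.integral_congr stepA]
  -- Step B : outer swap
  refine master_swap (fun t s => (q t * Qf a q (s-a/2)) * w s) a x (3*a/2) (x-a/2)
    (fun _ => 3*a/2) (fun t => t - a/2) (fun s => s + a/2) (fun _ => x)
    hax' (by linarith)
    (fun t ht => ?_)
    (fun s hs => Or.inl (by rw [mem_Ioo] at hs; linarith [hs.2]))
    (fun t s => by
      simp only [mem_Ioo]
      constructor
      · rintro ⟨⟨h1, h2⟩, h3, h4⟩
        exact ⟨⟨by linarith, by linarith⟩, by linarith, by linarith⟩
      · rintro ⟨⟨h1, h2⟩, h3, h4⟩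
        exact ⟨⟨by linarith, by linarith⟩, by linarith, by linarith⟩) ?_ |>.trans ?_
  · rw [mem_Ioo] at ht
    by_cases h2a : 2*a ≤ t
    · exact Or.inl (by linarith)
    · push_neg at h2a
      refine Or.inr (fun s hs => ?_)
      rw [uIcc_of_ge (by linarith)] at hs
      have : Qf a q (s - a/2) = 0 := Qf_zero hq0 (by linarith [hs.2])
      simp [this]
  · refine Integrable.congr (int_indicator_mul q ((Icc (0:ℝ) π).indicator (fun _ => (1:ℂ))) hq
      ind_one_integrable (fun p => Qf a q (p.2 - a/2) * w p.2)
      (((Qf_cont hq).comp (continuous_snd.sub continuous_const)).mul (hw.comp continuous_snd))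
      {p : ℝ × ℝ | p.1 ∈ Ioo a x ∧ p.2 ∈ Ioo (3*a/2) (p.1 - a/2)}
      (measS continuous_const (continuous_id.sub continuous_const)) 0 π 0 π ?_)
      (Filter.EventuallyEq.of_eq (Set.indicator_congr (fun p hp => ?_)))
    · rintro p ⟨hp1, hp2⟩
      rw [mem_Ioo] at hp1 hp2
      exact ⟨⟨by linarith [hp1.1], by linarith [hp1.2]⟩,
        ⟨by linarith [hp2.1], by linarith [hp2.2, hp1.2]⟩⟩
    · obtain ⟨hp1, hp2⟩ := hp
      rw [mem_Ioo] at hp1 hp2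
      rw [box_one (by linarith [hp2.1]) (by linarith [hp2.2, hp1.2])]
      ring
  · refine intervalIntegral.integral_congr (fun s _ => ?_)
    have : (∫ t in (s + a/2)..x, (q t * Qf a q (s-a/2)) * w s)
        = ∫ t in (s + a/2)..x, q t * (Qf a q (s-a/2) * w s) := by
      refine intervalIntegral.integral_congr (fun t _ => ?_); ring
    rw [this, intervalIntegral.integral_mul_const, Rf]
    ring

lemma CL2 (ha : 0 < a) (hax : 2*a ≤ x) (hxπ : x ≤ π) (hq : Integrable q volume)
    (hq0 : ∀ r, r ∉ Ioo a π → q r = 0) (hw : Continuous w)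
    (hW : ∀ s, HasDerivAt W (w s) s) :
    (∫ t in a..x, ∫ u in a..(t-a), (q t * q u) * (W (t-u+a/2) - W (3*a/2)))
      = ∫ s in (3*a/2)..(x-a/2), (∫ τ in a..(x-s+a/2), q τ * Rf x q (s+τ-a/2)) * w s := by
  have hq0' : ∀ r : ℝ, r ≤ a → q r = 0 := fun r hr =>
    hq0 r (fun hmem => absurd hmem.1 (not_lt.2 hr))
  have hWd : ∀ l r : ℝ, ∫ s in l..r, w s = W r - W l := fun l r =>
    intervalIntegral.integral_eq_sub_of_hasDerivAt (fun s _ => hW s)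
      (hw.intervalIntegrable _ _)
  have hax' : a ≤ x := by linarith
  -- Step A : for each t, swap (u,s)
  have stepA : ∀ t ∈ uIcc a x,
      (∫ u in a..(t-a), (q t * q u) * (W (t-u+a/2) - W (3*a/2)))
        = ∫ s in (3*a/2)..(t-a/2), (q t * Qf a q (t-s+a/2)) * w s := by
    intro t ht
    rw [uIcc_of_le hax', mem_Icc] at ht
    have h1 : (∫ u in a..(t-a), (q t * q u) * (W (t-u+a/2) - W (3*a/2)))
        = ∫ u in a..(t-a), ∫ s in (3*a/2)..(t-u+a/2), (q t * q u) * w s := by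
      refine intervalIntegral.integral_congr (fun u _ => ?_)
      rw [← hWd (3*a/2) (t-u+a/2), intervalIntegral.integral_const_mul]
    rw [h1]
    by_cases h2a : 2*a ≤ t
    · refine master_swap (fun u s => (q t * q u) * w s) a (t-a) (3*a/2) (t-a/2)
        (fun _ => 3*a/2) (fun u => t-u+a/2) (fun _ => a) (fun s => t-s+a/2)
        (by linarith) (by linarith)
        (fun u hu => Or.inl (by rw [mem_Ioo] at hu; linarith [hu.2]))
        (fun s hs => Or.inl (by rw [mem_Ioo] at hs; linarith [hs.2]))
        (fun u s => by
          simp only [mem_Ioo]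
          constructor
          · rintro ⟨⟨h1, h2⟩, h3, h4⟩
            exact ⟨⟨by linarith, by linarith⟩, by linarith, by linarith⟩
          · rintro ⟨⟨h1, h2⟩, h3, h4⟩
            exact ⟨⟨by linarith, by linarith⟩, by linarith, by linarith⟩) ?_ |>.trans ?_
      · refine Integrable.congr (int_indicator_mul q ((Icc (0:ℝ) π).indicator (fun _ => (1:ℂ))) hq
          ind_one_integrable (fun p => q t * w p.2)
          (continuous_const.mul (hw.comp continuous_snd))
          {p : ℝ × ℝ | p.1 ∈ Ioo a (t-a) ∧ p.2 ∈ Ioo (3*a/2) (t - p.1 + a/2)}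
          (measS continuous_const
            ((continuous_const.sub continuous_id).add continuous_const)) 0 π 0 π ?_)
          (Filter.EventuallyEq.of_eq (Set.indicator_congr (fun p hp => ?_)))
        · rintro p ⟨hp1, hp2⟩
          rw [mem_Ioo] at hp1 hp2
          exact ⟨⟨by linarith [hp1.1], by linarith [hp1.2]⟩,
            ⟨by linarith [hp2.1], by linarith [hp2.2, hp1.1, ht.2]⟩⟩
        · obtain ⟨hp1, hp2⟩ := hp
          rw [mem_Ioo] at hp1 hp2
          rw [box_one (by linarith [hp2.1]) (by linarith [hp2.2, hp1.1, ht.2])]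
          ring
      · refine intervalIntegral.integral_congr (fun s _ => ?_)
        have : (∫ u in a..(t-s+a/2), (q t * q u) * w s)
            = (∫ u in a..(t-s+a/2), (q u) * (q t * w s)) := by
          refine intervalIntegral.integral_congr (fun u _ => ?_); ring
        rw [this, intervalIntegral.integral_mul_const]
        rw [Qf]; ring
    · push_neg at h2a
      have hL : (∫ u in a..(t-a), ∫ s in (3*a/2)..(t-u+a/2), (q t * q u) * w s) = 0 := by
        rw [intervalIntegral.integral_congr (g := fun _ => 0) (fun u hu => ?_),
          intervalIntegral.integral_zero]
        rw [uIcc_of_ge (by linarith)] at hu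
        have : q u = 0 := hq0' u hu.2
        simp [this]
      have hR : (∫ s in (3*a/2)..(t-a/2), (q t * Qf a q (t-s+a/2)) * w s) = 0 := by
        rw [intervalIntegral.integral_congr (g := fun _ => 0) (fun s hs => ?_),
          intervalIntegral.integral_zero]
        rw [uIcc_of_ge (by linarith)] at hs
        have : Qf a q (t-s+a/2) = 0 := Qf_zero hq0 (by linarith [hs.1])
        simp [this]
      rw [hL, hR]
  rw [intervalIntegral.integral_congr stepA]
  -- Step B : outer swap
  have stepB : (∫ t in a..x, ∫ s in (3*a/2)..(t-a/2), (q t * Qf a q (t-s+a/2)) * w s)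
      = ∫ s in (3*a/2)..(x-a/2), ∫ t in (s+a/2)..x, (q t * Qf a q (t-s+a/2)) * w s := by
    refine master_swap (fun t s => (q t * Qf a q (t-s+a/2)) * w s) a x (3*a/2) (x-a/2)
      (fun _ => 3*a/2) (fun t => t - a/2) (fun s => s + a/2) (fun _ => x)
      hax' (by linarith)
      (fun t ht => ?_)
      (fun s hs => Or.inl (by rw [mem_Ioo] at hs; linarith [hs.2]))
      (fun t s => by
        simp only [mem_Ioo]
        constructor
        · rintro ⟨⟨h1, h2⟩, h3, h4⟩
          exact ⟨⟨by linarith, by linarith⟩, by linarith, by linarith⟩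
        · rintro ⟨⟨h1, h2⟩, h3, h4⟩
          exact ⟨⟨by linarith, by linarith⟩, by linarith, by linarith⟩) ?_
    · rw [mem_Ioo] at ht
      by_cases h2a : 2*a ≤ t
      · exact Or.inl (by linarith)
      · push_neg at h2a
        refine Or.inr (fun s hs => ?_)
        rw [uIcc_of_ge (by linarith)] at hs
        have : Qf a q (t-s+a/2) = 0 := Qf_zero hq0 (by linarith [hs.1])
        simp [this]
    · refine Integrable.congr (int_indicator_mul q ((Icc (0:ℝ) π).indicator (fun _ => (1:ℂ))) hq
        ind_one_integrable (fun p => Qf a q (p.1 - p.2 + a/2) * w p.2)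
        (((Qf_cont hq).comp ((continuous_fst.sub continuous_snd).add continuous_const)).mul
          (hw.comp continuous_snd))
        {p : ℝ × ℝ | p.1 ∈ Ioo a x ∧ p.2 ∈ Ioo (3*a/2) (p.1 - a/2)}
        (measS continuous_const (continuous_id.sub continuous_const)) 0 π 0 π ?_)
        (Filter.EventuallyEq.of_eq (Set.indicator_congr (fun p hp => ?_)))
      · rintro p ⟨hp1, hp2⟩
        rw [mem_Ioo] at hp1 hp2
        exact ⟨⟨by linarith [hp1.1], by linarith [hp1.2]⟩,
          ⟨by linarith [hp2.1], by linarith [hp2.2, hp1.2]⟩⟩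
      · obtain ⟨hp1, hp2⟩ := hp
        rw [mem_Ioo] at hp1 hp2
        rw [box_one (by linarith [hp2.1]) (by linarith [hp2.2, hp1.2])]
        ring
  rw [stepB]
  -- Step C : innermost swap, per s
  refine intervalIntegral.integral_congr (fun s hs => ?_)
  rw [uIcc_of_le (by linarith), mem_Icc] at hs
  have h1 : (∫ t in (s+a/2)..x, (q t * Qf a q (t-s+a/2)) * w s)
      = ∫ t in (s+a/2)..x, ∫ ξ in a..(t-s+a/2), (q t * q ξ) * w s := by
    refine intervalIntegral.integral_congr (fun t _ => ?_)
    have e1 : (∫ ξ in a..(t-s+a/2), (q t * q ξ) * w s)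
        = ∫ ξ in a..(t-s+a/2), (q ξ) * (q t * w s) := by
      refine intervalIntegral.integral_congr (fun ξ _ => ?_); ring
    rw [e1, intervalIntegral.integral_mul_const, Qf]
    ring
  rw [h1]
  have h2 : (∫ t in (s+a/2)..x, ∫ ξ in a..(t-s+a/2), (q t * q ξ) * w s)
      = ∫ ξ in a..(x-s+a/2), ∫ t in (s+ξ-a/2)..x, (q t * q ξ) * w s := by
    refine master_swap (fun t ξ => (q t * q ξ) * w s) (s+a/2) x a (x-s+a/2)
      (fun _ => a) (fun t => t-s+a/2) (fun ξ => s+ξ-a/2) (fun _ => x)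
      (by linarith [hs.2]) (by linarith [hs.2])
      (fun t ht => Or.inl (by rw [mem_Ioo] at ht; linarith [ht.1]))
      (fun ξ hξ => Or.inl (by rw [mem_Ioo] at hξ; linarith [hξ.2]))
      (fun t ξ => by
        simp only [mem_Ioo]
        constructor
        · rintro ⟨⟨h1, h2⟩, h3, h4⟩
          exact ⟨⟨by linarith, by linarith⟩, by linarith, by linarith⟩
        · rintro ⟨⟨h1, h2⟩, h3, h4⟩
          exact ⟨⟨by linarith [hs.1, ha], by linarith⟩, by linarith, by linarith⟩) ?_
    · refine Integrable.congr (int_indicator_mul q q hq hq (fun _ => w s) continuous_const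
        {p : ℝ × ℝ | p.1 ∈ Ioo (s+a/2) x ∧ p.2 ∈ Ioo a (p.1 - s + a/2)}
        (measS continuous_const ((continuous_id.sub continuous_const).add continuous_const))
        0 π 0 π ?_)
        (Filter.EventuallyEq.of_eq (Set.indicator_congr (fun p hp => ?_)))
      · rintro p ⟨hp1, hp2⟩
        rw [mem_Ioo] at hp1 hp2
        exact ⟨⟨by linarith [hp1.1, hs.1, ha], by linarith [hp1.2]⟩,
          ⟨by linarith [hp2.1, ha], by linarith [hp2.2, hp1.2, hs.1, ha]⟩⟩
      · rfl
  rw [h2]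
  have h3 : (∫ ξ in a..(x-s+a/2), ∫ t in (s+ξ-a/2)..x, (q t * q ξ) * w s)
      = ∫ ξ in a..(x-s+a/2), (q ξ * Rf x q (s+ξ-a/2)) * w s := by
    refine intervalIntegral.integral_congr (fun ξ _ => ?_)
    have e1 : (∫ t in (s+ξ-a/2)..x, (q t * q ξ) * w s)
        = ∫ t in (s+ξ-a/2)..x, (q t) * (q ξ * w s) := by
      refine intervalIntegral.integral_congr (fun t _ => ?_); ring
    rw [e1, intervalIntegral.integral_mul_const, Rf]
    ring
  rw [h3]
  have e2 : (∫ ξ in a..(x-s+a/2), (q ξ * Rf x q (s+ξ-a/2)) * w s)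
      = (∫ ξ in a..(x-s+a/2), q ξ * Rf x q (s+ξ-a/2)) * w s := by
    rw [intervalIntegral.integral_mul_const]
  rw [e2]

lemma ae_ne_restrict (s : Set ℝ) (c : ℝ) : ∀ᵐ t ∂(volume.restrict s), t ≠ c := by
  rw [ae_iff]
  have h1 : {t : ℝ | ¬ t ≠ c} = {c} := by ext t; simp
  rw [h1]
  exact le_antisymm ((Measure.restrict_apply_le _ _).trans (by simp)) (by simp)

lemma core (ha : 0 < a) (hax : 2*a ≤ x) (hxπ : x ≤ π) (hq : Integrable q volume)
    (hq0 : ∀ r, r ∉ Ioo a π → q r = 0) (hw : Continuous w)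
    (hW : ∀ s, HasDerivAt W (w s) s) (c0 ε : ℂ) (Ψ : ℝ → ℝ → ℂ)
    (hkern : ∀ t u : ℝ, Ψ t u
      = c0 * ((W (t-a/2) - W (u+a/2)) + ε * (W (t-u+a/2) - W (3*a/2)))) :
    (∫ t in a..x, ∫ u in a..(t-a), (q t * q u) * Ψ t u)
      = c0 * ∫ s in (3*a/2)..(x-a/2),
          ((Rf x q (s+a/2) * Qf a q (s-a/2))
            + ε * (∫ τ in a..(x-s+a/2), q τ * Rf x q (s+τ-a/2))) * w s := by
  have hWc : Continuous W := by
    rw [continuous_iff_continuousAt]; exact fun s => (hW s).continuousAt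
  have hq0' : ∀ r : ℝ, r ≤ a → q r = 0 := fun r hr => hq0 r (fun hm => absurd hm.1 (not_lt.2 hr))
  have hax' : a ≤ x := by linarith
  -- marginal integrability helper
  have marg : ∀ e : ℝ × ℝ → ℂ, Continuous e →
      IntervalIntegrable (fun t => ∫ u in a..(t-a), (q t * q u) * e (t, u)) volume a x := by
    intro e he
    set S : Set (ℝ×ℝ) := {p : ℝ×ℝ | p.1 ∈ Ioo a x ∧ p.2 ∈ Ioo a (p.1-a)} with hSdef
    have hS : MeasurableSet S := measS continuous_const (continuous_id.sub continuous_const)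
    have hbox : S ⊆ Icc (0:ℝ) π ×ˢ Icc (0:ℝ) π := by
      rintro p ⟨hp1, hp2⟩
      rw [mem_Ioo] at hp1 hp2
      exact ⟨⟨by linarith [hp1.1], by linarith [hp1.2]⟩,
        ⟨by linarith [hp2.1], by linarith [hp2.2, hp1.2]⟩⟩
    have hF : Integrable (S.indicator (fun p => (q p.1 * q p.2) * e p)) volume :=
      int_indicator_mul q q hq hq e he S hS 0 π 0 π hbox
    have hmarg : Integrable
        (fun t => ∫ u, (S.indicator (fun p => (q p.1 * q p.2) * e p)) (t, u)) volume := by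
      rw [Measure.volume_eq_prod] at hF
      exact hF.integral_prod_left
    rw [intervalIntegrable_iff, uIoc_of_le hax']
    refine (hmarg.integrableOn (s := Ioc a x)).congr ?_
    filter_upwards [ae_ne_restrict (Ioc a x) x, ae_restrict_mem measurableSet_Ioc] with t htx ht
    have ht' : t ∈ Ioo a x := ⟨ht.1, lt_of_le_of_ne ht.2 htx⟩
    by_cases h2a : 2*a ≤ t
    · rw [interval_to_indicator _ (by linarith)]
      congr 1
      funext u
      by_cases hu : u ∈ Ioo a (t-a)
      · rw [Set.indicator_of_mem (show (t,u) ∈ S from ⟨ht', hu⟩), Set.indicator_of_mem hu]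
      · rw [Set.indicator_of_notMem (fun hm => hu hm.2), Set.indicator_of_notMem hu]
    · push_neg at h2a
      have hL : (∫ u in a..(t-a), (q t * q u) * e (t, u)) = 0 := by
        rw [intervalIntegral.integral_congr (g := fun _ => 0) (fun u hu => ?_),
          intervalIntegral.integral_zero]
        rw [uIcc_of_ge (by linarith)] at hu
        have : q u = 0 := hq0' u hu.2
        simp [this]
      have hR : ∀ u : ℝ, (S.indicator (fun p => (q p.1 * q p.2) * e p)) (t, u) = 0 := by
        intro u
        refine Set.indicator_of_notMem (fun hm => ?_) _
        obtain ⟨_, hm2⟩ := hm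
        rw [mem_Ioo] at hm2
        linarith [hm2.1, hm2.2]
      rw [hL]
      simp only [hR, integral_zero]
  -- T2 marginal integrability
  have hT2 : IntervalIntegrable
      (fun s => (∫ τ in a..(x-s+a/2), q τ * Rf x q (s+τ-a/2)) * w s) volume (3*a/2) (x-a/2) := by
    set SB : Set (ℝ×ℝ) := {p : ℝ×ℝ | p.1 ∈ Ioo (3*a/2) (x-a/2) ∧ p.2 ∈ Ioo a (x-p.1+a/2)}
      with hSBdef
    have hSB : MeasurableSet SB :=
      measS continuous_const ((continuous_const.sub continuous_id).add continuous_const)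
    have hbox : SB ⊆ Icc (0:ℝ) π ×ˢ Icc (0:ℝ) π := by
      rintro p ⟨hp1, hp2⟩
      rw [mem_Ioo] at hp1 hp2
      exact ⟨⟨by linarith [hp1.1], by linarith [hp1.2]⟩,
        ⟨by linarith [hp2.1], by linarith [hp2.2, hp1.1]⟩⟩
    have hFB : Integrable
        (SB.indicator (fun p => q p.2 * Rf x q (p.1+p.2-a/2))) volume := by
      refine Integrable.congr (int_indicator_mul ((Icc (0:ℝ) π).indicator (fun _ => (1:ℂ))) q
        ind_one_integrable hq (fun p => Rf x q (p.1+p.2-a/2))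
        ((Rf_cont hq).comp ((continuous_fst.add continuous_snd).sub continuous_const))
        SB hSB 0 π 0 π hbox)
        (Filter.EventuallyEq.of_eq (Set.indicator_congr (fun p hp => ?_)))
      obtain ⟨hp1, hp2⟩ := hp
      rw [mem_Ioo] at hp1 hp2
      rw [box_one (by linarith [hp1.1]) (by linarith [hp1.2])]
      ring
    have hmargB : Integrable
        (fun s => ∫ τ, (SB.indicator (fun p => q p.2 * Rf x q (p.1+p.2-a/2))) (s, τ)) volume := by
      rw [Measure.volume_eq_prod] at hFB
      exact hFB.integral_prod_left
    have hmul : IntervalIntegrable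
        (fun s => (∫ τ, (SB.indicator (fun p => q p.2 * Rf x q (p.1+p.2-a/2))) (s, τ)) * w s)
        volume (3*a/2) (x-a/2) :=
      hmargB.intervalIntegrable.mul_continuousOn hw.continuousOn
    rw [intervalIntegrable_iff, uIoc_of_le (by linarith)] at hmul ⊢
    refine hmul.congr ?_
    filter_upwards [ae_ne_restrict (Ioc (3*a/2) (x-a/2)) (x-a/2),
      ae_restrict_mem measurableSet_Ioc] with s hsx hs
    have hs' : s ∈ Ioo (3*a/2) (x-a/2) := ⟨hs.1, lt_of_le_of_ne hs.2 hsx⟩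
    rw [mem_Ioo] at hs'
    congr 1
    rw [interval_to_indicator _ (by linarith [hs'.2])]
    congr 1
    funext τ
    by_cases hτ : τ ∈ Ioo a (x-s+a/2)
    · rw [Set.indicator_of_mem (show (s,τ) ∈ SB from ⟨mem_Ioo.2 hs', hτ⟩),
        Set.indicator_of_mem hτ]
    · rw [Set.indicator_of_notMem (fun hm => hτ hm.2), Set.indicator_of_notMem hτ]
  -- main chain
  have step1 : (∫ t in a..x, ∫ u in a..(t-a), (q t * q u) * Ψ t u)
      = ∫ t in a..x, (c0 * (∫ u in a..(t-a), (q t * q u) * (W (t-a/2) - W (u+a/2)))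
          + (c0*ε) * (∫ u in a..(t-a), (q t * q u) * (W (t-u+a/2) - W (3*a/2)))) := by
    refine intervalIntegral.integral_congr (fun t _ => ?_)
    have e0 : ∀ u : ℝ, (q t * q u) * Ψ t u
        = c0 * ((q t * q u) * (W (t-a/2) - W (u+a/2)))
          + (c0*ε) * ((q t * q u) * (W (t-u+a/2) - W (3*a/2))) := fun u => by
      rw [hkern]; ring
    rw [intervalIntegral.integral_congr (fun u _ => e0 u)]
    have hI1 : IntervalIntegrable
        (fun u => c0 * ((q t * q u) * (W (t-a/2) - W (u+a/2)))) volume a (t-a) :=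
      (((hq.const_mul (q t)).intervalIntegrable).mul_continuousOn
        ((continuous_const.sub (hWc.comp (continuous_id.add continuous_const))).continuousOn)).const_mul c0
    have hI2 : IntervalIntegrable
        (fun u => (c0*ε) * ((q t * q u) * (W (t-u+a/2) - W (3*a/2)))) volume a (t-a) :=
      (((hq.const_mul (q t)).intervalIntegrable).mul_continuousOn
        (((hWc.comp ((continuous_const.sub continuous_id).add continuous_const)).sub
          continuous_const).continuousOn)).const_mul (c0*ε)
    rw [intervalIntegral.integral_add hI1 hI2, intervalIntegral.integral_const_mul,
      intervalIntegral.integral_const_mul]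
  rw [step1]
  have hA : IntervalIntegrable
      (fun t => ∫ u in a..(t-a), (q t * q u) * (W (t-a/2) - W (u+a/2))) volume a x :=
    marg (fun p => W (p.1-a/2) - W (p.2+a/2))
      ((hWc.comp (continuous_fst.sub continuous_const)).sub
        (hWc.comp (continuous_snd.add continuous_const)))
  have hB : IntervalIntegrable
      (fun t => ∫ u in a..(t-a), (q t * q u) * (W (t-u+a/2) - W (3*a/2))) volume a x :=
    marg (fun p => W (p.1-p.2+a/2) - W (3*a/2))
      ((hWc.comp ((continuous_fst.sub continuous_snd).add continuous_const)).sub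
        continuous_const)
  rw [intervalIntegral.integral_add (hA.const_mul c0) (hB.const_mul (c0*ε)),
    intervalIntegral.integral_const_mul, intervalIntegral.integral_const_mul,
    CL1 ha hax hxπ hq hq0 hw hW, CL2 ha hax hxπ hq hq0 hw hW]
  have hT1 : IntervalIntegrable
      (fun s => (Rf x q (s+a/2) * Qf a q (s-a/2)) * w s) volume (3*a/2) (x-a/2) :=
    ((((Rf_cont hq).comp (continuous_id.add continuous_const)).mul
      ((Qf_cont hq).comp (continuous_id.sub continuous_const))).mul hw).intervalIntegrable _ _
  have merge : (∫ s in (3*a/2)..(x-a/2),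
        ((Rf x q (s+a/2) * Qf a q (s-a/2))
          + ε * (∫ τ in a..(x-s+a/2), q τ * Rf x q (s+τ-a/2))) * w s)
      = (∫ s in (3*a/2)..(x-a/2), (Rf x q (s+a/2) * Qf a q (s-a/2)) * w s)
        + ε * ∫ s in (3*a/2)..(x-a/2),
            (∫ τ in a..(x-s+a/2), q τ * Rf x q (s+τ-a/2)) * w s := by
    have e1 : ∀ s : ℝ, ((Rf x q (s+a/2) * Qf a q (s-a/2))
          + ε * (∫ τ in a..(x-s+a/2), q τ * Rf x q (s+τ-a/2))) * w s
        = (Rf x q (s+a/2) * Qf a q (s-a/2)) * w s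
          + ε * ((∫ τ in a..(x-s+a/2), q τ * Rf x q (s+τ-a/2)) * w s) := fun s => by ring
    rw [intervalIntegral.integral_congr (fun s _ => e1 s),
      intervalIntegral.integral_add hT1 (hT2.const_mul ε),
      intervalIntegral.integral_const_mul]
  rw [merge]
  ring

end CL


lemma trig0 (z1 z2 z3 : ℂ) : Complex.sin z1 * Complex.sin z2 * Complex.cos z3
    = (Complex.cos (z1 - z2 - z3) - Complex.cos (z1 + z2 - z3)
        + Complex.cos (z1 - z2 + z3) - Complex.cos (z1 + z2 + z3))/4 := by
  simp only [Complex.cos_add, Complex.cos_sub, Complex.sin_add, Complex.sin_sub]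
  ring

lemma trig1 (z1 z2 z3 : ℂ) : Complex.sin z1 * Complex.sin z2 * Complex.sin z3
    = (Complex.sin (z1 - z2 + z3) - Complex.sin (z1 - z2 - z3)
        - Complex.sin (z1 + z2 + z3) + Complex.sin (z1 + z2 - z3))/4 := by
  simp only [Complex.cos_add, Complex.cos_sub, Complex.sin_add, Complex.sin_sub]
  ring

lemma hasDerivAt_W0 (x a : ℝ) (ρ : ℂ) (hρ : ρ ≠ 0) (s : ℝ) :
    HasDerivAt (fun s : ℝ => Complex.cos (ρ * ((x - 2*s + a : ℝ) : ℂ)) / (2*ρ^2))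
      (Complex.sin (ρ * ((x - 2*s + a : ℝ) : ℂ)) / ρ) s := by
  have g1 : HasDerivAt (fun z : ℂ => (x:ℂ) - 2*z + (a:ℂ)) (-2) ((s:ℝ):ℂ) := by
    simpa using (((hasDerivAt_id ((s:ℝ):ℂ)).const_mul (2:ℂ)).const_sub ((x:ℂ))).add_const ((a:ℂ))
  have g2 := ((g1.const_mul ρ).ccos).div_const (2*ρ^2)
  have g3 := g2.comp_ofReal
  have harg : ∀ y : ℝ, ρ * ((x - 2*y + a : ℝ) : ℂ) = ρ * ((x:ℂ) - 2*(y:ℂ) + (a:ℂ)) := by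
    intro y; push_cast; ring
  have hfun : (fun y : ℝ => Complex.cos (ρ * ((x:ℂ) - 2*(y:ℂ) + (a:ℂ))) / (2*ρ^2))
      = (fun y : ℝ => Complex.cos (ρ * ((x - 2*y + a : ℝ) : ℂ)) / (2*ρ^2)) := by
    funext y; rw [harg]
  rw [hfun] at g3
  convert g3 using 1
  rw [harg]
  field_simp

lemma hasDerivAt_W1 (x a : ℝ) (ρ : ℂ) (hρ : ρ ≠ 0) (s : ℝ) :
    HasDerivAt (fun s : ℝ => -Complex.sin (ρ * ((x - 2*s + a : ℝ) : ℂ)) / (2*ρ))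
      (Complex.cos (ρ * ((x - 2*s + a : ℝ) : ℂ))) s := by
  have g1 : HasDerivAt (fun z : ℂ => (x:ℂ) - 2*z + (a:ℂ)) (-2) ((s:ℝ):ℂ) := by
    simpa using (((hasDerivAt_id ((s:ℝ):ℂ)).const_mul (2:ℂ)).const_sub ((x:ℂ))).add_const ((a:ℂ))
  have g2 := (((g1.const_mul ρ).csin).neg).div_const (2*ρ)
  have g3 := g2.comp_ofReal
  have harg : ∀ y : ℝ, ρ * ((x - 2*y + a : ℝ) : ℂ) = ρ * ((x:ℂ) - 2*(y:ℂ) + (a:ℂ)) := by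
    intro y; push_cast; ring
  have hfun : (fun y : ℝ => -Complex.sin (ρ * ((x:ℂ) - 2*(y:ℂ) + (a:ℂ))) / (2*ρ))
      = (fun y : ℝ => -Complex.sin (ρ * ((x - 2*y + a : ℝ) : ℂ)) / (2*ρ)) := by
    funext y; rw [harg]
  simp only [Pi.neg_apply] at g3
  rw [hfun] at g3
  convert g3 using 1
  rw [harg]
  field_simp

lemma kern0 (x a : ℝ) (ρ : ℂ) (hρ : ρ ≠ 0) (t u : ℝ) :
    (Complex.sin (ρ * ((x - t : ℝ):ℂ)) / ρ) * (Complex.sin (ρ * ((t - a - u : ℝ):ℂ)) / ρ)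
        * y0 ρ 0 (u - a)
      = (1/(2*(ρ^2)^(0:ℕ))) *
          (((fun s : ℝ => Complex.cos (ρ * ((x - 2*s + a : ℝ):ℂ))/(2*ρ^2)) (t-a/2)
            - (fun s : ℝ => Complex.cos (ρ * ((x - 2*s + a : ℝ):ℂ))/(2*ρ^2)) (u+a/2))
          + (-1:ℂ)^(0:ℕ) * ((fun s : ℝ => Complex.cos (ρ * ((x - 2*s + a : ℝ):ℂ))/(2*ρ^2)) (t-u+a/2)
            - (fun s : ℝ => Complex.cos (ρ * ((x - 2*s + a : ℝ):ℂ))/(2*ρ^2)) (3*a/2))) := by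
  simp only [y0, if_pos rfl, pow_zero]
  have h := trig0 (ρ * ((x - t : ℝ):ℂ)) (ρ * ((t - a - u : ℝ):ℂ)) (ρ * ((u - a : ℝ):ℂ))
  have e1 : ρ * ((x - 2*(t-a/2) + a : ℝ):ℂ)
      = ρ * ((x - t : ℝ):ℂ) - ρ * ((t - a - u : ℝ):ℂ) - ρ * ((u - a : ℝ):ℂ) := by
    push_cast; ring
  have e2 : ρ * ((x - 2*(u+a/2) + a : ℝ):ℂ)
      = ρ * ((x - t : ℝ):ℂ) + ρ * ((t - a - u : ℝ):ℂ) - ρ * ((u - a : ℝ):ℂ) := by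
    push_cast; ring
  have e3 : ρ * ((x - 2*(t-u+a/2) + a : ℝ):ℂ)
      = ρ * ((x - t : ℝ):ℂ) - ρ * ((t - a - u : ℝ):ℂ) + ρ * ((u - a : ℝ):ℂ) := by
    push_cast; ring
  have e4 : ρ * ((x - 2*(3*a/2) + a : ℝ):ℂ)
      = ρ * ((x - t : ℝ):ℂ) + ρ * ((t - a - u : ℝ):ℂ) + ρ * ((u - a : ℝ):ℂ) := by
    push_cast; ring
  push_cast at h e1 e2 e3 e4 ⊢
  rw [e1, e2, e3, e4]
  field_simp
  ring_nf at h ⊢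
  linear_combination 4 * h

lemma kern1 (x a : ℝ) (ρ : ℂ) (hρ : ρ ≠ 0) (t u : ℝ) :
    (Complex.sin (ρ * ((x - t : ℝ):ℂ)) / ρ) * (Complex.sin (ρ * ((t - a - u : ℝ):ℂ)) / ρ)
        * y0 ρ 1 (u - a)
      = (1/(2*(ρ^2)^(1:ℕ))) *
          (((fun s : ℝ => -Complex.sin (ρ * ((x - 2*s + a : ℝ):ℂ))/(2*ρ)) (t-a/2)
            - (fun s : ℝ => -Complex.sin (ρ * ((x - 2*s + a : ℝ):ℂ))/(2*ρ)) (u+a/2))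
          + (-1:ℂ)^(1:ℕ) * ((fun s : ℝ => -Complex.sin (ρ * ((x - 2*s + a : ℝ):ℂ))/(2*ρ)) (t-u+a/2)
            - (fun s : ℝ => -Complex.sin (ρ * ((x - 2*s + a : ℝ):ℂ))/(2*ρ)) (3*a/2))) := by
  simp only [y0, if_neg (one_ne_zero), pow_one]
  have h := trig1 (ρ * ((x - t : ℝ):ℂ)) (ρ * ((t - a - u : ℝ):ℂ)) (ρ * ((u - a : ℝ):ℂ))
  have e1 : ρ * ((x - 2*(t-a/2) + a : ℝ):ℂ)
      = ρ * ((x - t : ℝ):ℂ) - ρ * ((t - a - u : ℝ):ℂ) - ρ * ((u - a : ℝ):ℂ) := by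
    push_cast; ring
  have e2 : ρ * ((x - 2*(u+a/2) + a : ℝ):ℂ)
      = ρ * ((x - t : ℝ):ℂ) + ρ * ((t - a - u : ℝ):ℂ) - ρ * ((u - a : ℝ):ℂ) := by
    push_cast; ring
  have e3 : ρ * ((x - 2*(t-u+a/2) + a : ℝ):ℂ)
      = ρ * ((x - t : ℝ):ℂ) - ρ * ((t - a - u : ℝ):ℂ) + ρ * ((u - a : ℝ):ℂ) := by
    push_cast; ring
  have e4 : ρ * ((x - 2*(3*a/2) + a : ℝ):ℂ)
      = ρ * ((x - t : ℝ):ℂ) + ρ * ((t - a - u : ℝ):ℂ) + ρ * ((u - a : ℝ):ℂ) := by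
    push_cast; ring
  push_cast at h e1 e2 e3 e4 ⊢
  rw [e1, e2, e3, e4]
  field_simp
  ring_nf at h ⊢
  linear_combination 4 * h

lemma ySeq2_expand (a x : ℝ) (q : ℝ → ℂ) (ρ : ℂ) (ν : ℕ) :
    ySeq a q ρ ν 2 x = ∫ t in a..x, ∫ u in a..(t-a),
      (q t * q u) * ((Complex.sin (ρ * ((x - t : ℝ):ℂ)) / ρ)
        * (Complex.sin (ρ * ((t - a - u : ℝ):ℂ)) / ρ) * y0 ρ ν (u - a)) := by
  show (∫ t in a..x, (Complex.sin (ρ * ((x - t : ℝ):ℂ)) / ρ) * q t * ySeq a q ρ ν 1 (t - a)) = _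
  refine intervalIntegral.integral_congr (fun t _ => ?_)
  show (Complex.sin (ρ * ((x - t : ℝ):ℂ)) / ρ) * q t
      * (∫ u in a..(t-a), (Complex.sin (ρ * ((t - a - u : ℝ):ℂ)) / ρ) * q u * y0 ρ ν (u - a)) = _
  rw [← intervalIntegral.integral_const_mul]
  exact intervalIntegral.integral_congr (fun u _ => by ring)


end S3

theorem statement3
    (a : ℝ) (ha : a ∈ Set.Ioo 0 π)
    (q : ℝ → ℂ)
    (hq2 : MemLp q 2 (volume.restrict (Set.Ioo 0 π)))
    (hq0 : ∀ x : ℝ, x ∉ Set.Ioo a π → q x = 0)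
    (ρ : ℂ) (hρ : ρ ≠ 0) (lam : ℂ) (hlam : lam = ρ ^ 2) :
    ∀ ν : ℕ, (ν = 0 ∨ ν = 1) → ∀ x : ℝ, 2 * a ≤ x → x ≤ π →
      ySeq a q ρ ν 2 x
        = (1 / (2 * lam ^ ν)) *
            ∫ t in (3 * a / 2)..(x - a / 2), Pfun a q ν x t * y0 ρ (1 - ν) (x - 2 * t + a) := by
  obtain ⟨ha0, haπ⟩ := ha
  subst hlam
  have hsub : Set.Ioo a π ⊆ Set.Ioo 0 π := fun r hr => ⟨lt_trans ha0 hr.1, hr.2⟩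
  have hqzero0 : ∀ r, r ∉ Set.Ioo (0:ℝ) π → q r = 0 := fun r hr => hq0 r (fun hm => hr (hsub hm))
  have hqind : q = (Set.Ioo (0:ℝ) π).indicator q := by
    funext r
    by_cases h : r ∈ Set.Ioo (0:ℝ) π
    · rw [Set.indicator_of_mem h]
    · rw [Set.indicator_of_notMem h]; exact hqzero0 r h
  haveI : IsFiniteMeasure (volume.restrict (Set.Ioo (0:ℝ) π)) := by
    constructor
    rw [Measure.restrict_apply_univ, Real.volume_Ioo]
    exact ENNReal.ofReal_lt_top
  have hq1 : Integrable q (volume.restrict (Set.Ioo (0:ℝ) π)) :=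
    memLp_one_iff_integrable.1 (hq2.mono_exponent (by norm_num))
  have hqint : Integrable q volume := by
    rw [hqind]
    exact (integrable_indicator_iff measurableSet_Ioo).2 hq1
  intro ν hν x hx2a hxπ
  rcases hν with rfl | rfl
  · -- ν = 0
    have hw : Continuous (fun s : ℝ => y0 ρ 1 (x - 2*s + a)) := by
      have hfn : (fun s : ℝ => y0 ρ 1 (x - 2*s + a))
          = fun s : ℝ => Complex.sin (ρ * ((x - 2*s + a : ℝ):ℂ)) / ρ := by
        funext s; simp [y0]
      rw [hfn]
      exact (Complex.continuous_sin.comp (continuous_const.mul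
        (Complex.continuous_ofReal.comp
          ((continuous_const.sub (continuous_const.mul continuous_id)).add
            continuous_const)))).div_const ρ
    have hW : ∀ s : ℝ, HasDerivAt
        (fun s : ℝ => Complex.cos (ρ * ((x - 2*s + a : ℝ):ℂ))/(2*ρ^2))
        ((fun s : ℝ => y0 ρ 1 (x - 2*s + a)) s) s := by
      intro s
      simpa [y0] using S3.hasDerivAt_W0 x a ρ hρ s
    refine (S3.ySeq2_expand a x q ρ 0).trans ((S3.core ha0 hx2a hxπ hqint hq0 hw hW
      (1/(2*(ρ^2)^(0:ℕ))) ((-1:ℂ)^(0:ℕ)) _ (fun t u => S3.kern0 x a ρ hρ t u)).trans ?_)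
    rfl
  · -- ν = 1
    have hw : Continuous (fun s : ℝ => y0 ρ 0 (x - 2*s + a)) := by
      have hfn : (fun s : ℝ => y0 ρ 0 (x - 2*s + a))
          = fun s : ℝ => Complex.cos (ρ * ((x - 2*s + a : ℝ):ℂ)) := by
        funext s; simp [y0]
      rw [hfn]
      exact Complex.continuous_cos.comp (continuous_const.mul
        (Complex.continuous_ofReal.comp
          ((continuous_const.sub (continuous_const.mul continuous_id)).add
            continuous_const)))
    have hW : ∀ s : ℝ, HasDerivAt
        (fun s : ℝ => -Complex.sin (ρ * ((x - 2*s + a : ℝ):ℂ))/(2*ρ))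
        ((fun s : ℝ => y0 ρ 0 (x - 2*s + a)) s) s := by
      intro s
      simpa [y0] using S3.hasDerivAt_W1 x a ρ hρ s
    refine (S3.ySeq2_expand a x q ρ 1).trans ((S3.core ha0 hx2a hxπ hqint hq0 hw hW
      (1/(2*(ρ^2)^(1:ℕ))) ((-1:ℂ)^(1:ℕ)) _ (fun t u => S3.kern1 x a ρ hρ t u)).trans ?_)
    rfl
end

section
/- Fix a ∈ (0, π) and a function q : ℝ → ℂ, square-integrable on (0, π), with q(x) = 0 for all x outside (a, π). Let ω(x) = ∫_a^x q(t) dt, ω₁(x) = ∫_{2a}^x q(t) ω(t−a) dt, and for ν ∈ {0,1} let P_ν(x,t) = (∫_{t+a/2}^{x} q(τ) dτ)(∫_a^{t−a/2} q(ξ) dξ) + (−1)^ν ∫_a^{x−t+a/2} q(τ) (∫_{t+τ−a/2}^{x} q(ξ) dξ) dτ. Then for every ν ∈ {0,1} and every x with 2a ≤ x ≤ π: P_ν(x, 3a/2) = (−1)^ν ω₁(x). -/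
open MeasureTheory Set
open scoped Real

noncomputable def omega1 (a : ℝ) (q : ℝ → ℂ) (x : ℝ) : ℂ :=
  ∫ t in (2 * a)..x, q t * (∫ τ in a..(t - a), q τ)

lemma swap_core (a x : ℝ) (ha : 0 < a) (hx : 2 * a ≤ x) (q : ℝ → ℂ)
    (hq : Integrable q) :
    ∫ τ in Ioc a (x - a), q τ * ∫ t in Ioc (τ + a) x, q t
      = ∫ t in Ioc (2 * a) x, q t * ∫ τ in Ioo a (t - a), q τ := by
  set S : Set (ℝ × ℝ) := {p : ℝ × ℝ | p.1 ∈ Ioc a (x - a) ∧ p.2 ∈ Ioc (p.1 + a) x} with hSdef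
  have hSeq : S = {p : ℝ × ℝ | p.2 ∈ Ioc (2 * a) x ∧ p.1 ∈ Ioo a (p.2 - a)} := by
    ext p
    simp only [hSdef, mem_setOf_eq, mem_Ioc, mem_Ioo]
    constructor
    · rintro ⟨⟨h1, h2⟩, h3, h4⟩
      exact ⟨⟨by linarith, h4⟩, h1, by linarith⟩
    · rintro ⟨⟨h1, h2⟩, h3, h4⟩
      exact ⟨⟨h3, by linarith⟩, by linarith, h2⟩
  have hS : MeasurableSet S := by
    have : S = {p : ℝ × ℝ | a < p.1} ∩ {p : ℝ × ℝ | p.1 ≤ x - a}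
        ∩ {p : ℝ × ℝ | p.1 + a < p.2} ∩ {p : ℝ × ℝ | p.2 ≤ x} := by
      ext p
      simp only [hSdef, mem_setOf_eq, mem_Ioc, mem_inter_iff]
      tauto
    rw [this]
    exact (((measurableSet_lt measurable_const measurable_fst).inter
      (measurableSet_le measurable_fst measurable_const)).inter
      (measurableSet_lt (measurable_fst.add_const a) measurable_snd)).inter
      (measurableSet_le measurable_snd measurable_const)
  set F : ℝ × ℝ → ℂ := fun p => q p.1 * q p.2 with hFdef
  have hFint : Integrable F (volume.prod volume) := hq.mul_prod hq
  have hfint : Integrable (Function.uncurry fun τ t => S.indicator F (τ, t))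
      (volume.prod volume) := by
    have : (Function.uncurry fun τ t => S.indicator F (τ, t)) = S.indicator F := by
      ext p; cases p; rfl
    rw [this]
    exact hFint.indicator hS
  have hswap : ∫ τ, ∫ t, S.indicator F (τ, t) = ∫ t, ∫ τ, S.indicator F (τ, t) :=
    integral_integral_swap hfint
  have hleft : ∫ τ, ∫ t, S.indicator F (τ, t)
      = ∫ τ in Ioc a (x - a), q τ * ∫ t in Ioc (τ + a) x, q t := by
    rw [← integral_indicator measurableSet_Ioc]
    congr 1 with τ
    by_cases hτ : τ ∈ Ioc a (x - a)
    · rw [indicator_of_mem hτ]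
      have : (fun t => S.indicator F (τ, t))
          = (Ioc (τ + a) x).indicator (fun t => q τ * q t) := by
        ext t
        simp only [hSdef, indicator_apply, mem_setOf_eq, hτ, true_and, hFdef]
      rw [this, integral_indicator measurableSet_Ioc, ← integral_const_mul]
    · rw [indicator_of_notMem hτ]
      have : (fun t => S.indicator F (τ, t)) = fun _ => (0 : ℂ) := by
        ext t
        simp only [hSdef, indicator_apply, mem_setOf_eq, hτ, false_and, if_false]
      rw [this, integral_zero]
  have hright : ∫ t, ∫ τ, S.indicator F (τ, t)
      = ∫ t in Ioc (2 * a) x, q t * ∫ τ in Ioo a (t - a), q τ := by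
    rw [← integral_indicator measurableSet_Ioc]
    congr 1 with t
    by_cases ht : t ∈ Ioc (2 * a) x
    · rw [indicator_of_mem ht]
      have : (fun τ => S.indicator F (τ, t))
          = (Ioo a (t - a)).indicator (fun τ => q τ * q t) := by
        ext τ
        simp only [hSeq, indicator_apply, mem_setOf_eq, ht, true_and, hFdef]
      rw [this, integral_indicator measurableSet_Ioo]
      rw [mul_comm (q t), ← integral_mul_const]
    · rw [indicator_of_notMem ht]
      have : (fun τ => S.indicator F (τ, t)) = fun _ => (0 : ℂ) := by
        ext τ
        simp only [hSeq, indicator_apply, mem_setOf_eq, ht, false_and, if_false]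
      rw [this, integral_zero]
  rw [← hleft, hswap, hright]

theorem statement6
    (a : ℝ) (ha : a ∈ Set.Ioo 0 π)
    (q : ℝ → ℂ)
    (hq2 : MemLp q 2 (volume.restrict (Set.Ioo 0 π)))
    (hq0 : ∀ x : ℝ, x ∉ Set.Ioo a π → q x = 0) :
    ∀ ν : ℕ, (ν = 0 ∨ ν = 1) → ∀ x : ℝ, 2 * a ≤ x → x ≤ π →
      Pfun a q ν x (3 * a / 2) = (-1) ^ ν * omega1 a q x := by
  have ha0 : 0 < a := ha.1
  -- q is integrable on ℝ
  have hqInt : Integrable q := by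
    haveI : IsFiniteMeasure (volume.restrict (Set.Ioo 0 π)) := by
      constructor
      rw [Measure.restrict_apply_univ]
      exact measure_Ioo_lt_top
    have h1 : IntegrableOn q (Set.Ioo 0 π) volume := hq2.integrable (by norm_num)
    have h2 : (Set.Ioo 0 π).indicator q = q := by
      apply Set.indicator_eq_self.2
      intro y hy
      have hqy : q y ≠ 0 := hy
      by_contra hy'
      exact hqy (hq0 y (fun hmem => hy' ⟨lt_trans ha0 hmem.1, hmem.2⟩))
    rw [← h2]
    exact h1.integrable_indicator measurableSet_Ioo
  intro ν _ x hx2a _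
  unfold Pfun omega1
  have e0 : 3 * a / 2 - a / 2 = a := by ring
  rw [e0, intervalIntegral.integral_same, mul_zero, zero_add]
  have e1 : x - 3 * a / 2 + a / 2 = x - a := by ring
  rw [e1]
  simp only [show ∀ τ : ℝ, 3 * a / 2 + τ - a / 2 = τ + a from fun τ => by ring]
  congr 1
  rw [intervalIntegral.integral_of_le (by linarith : a ≤ x - a),
    intervalIntegral.integral_of_le (by linarith : 2 * a ≤ x)]
  have hL : ∫ τ in Ioc a (x - a), q τ * ∫ ξ in (τ + a)..x, q ξ
      = ∫ τ in Ioc a (x - a), q τ * ∫ t in Ioc (τ + a) x, q t := by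
    apply setIntegral_congr_ae measurableSet_Ioc
    filter_upwards with τ hτ
    rw [intervalIntegral.integral_of_le (by simp only [mem_Ioc] at hτ; linarith [hτ.2])]
  have hR : ∫ t in Ioc (2 * a) x, q t * ∫ τ in a..(t - a), q τ
      = ∫ t in Ioc (2 * a) x, q t * ∫ τ in Ioo a (t - a), q τ := by
    apply setIntegral_congr_ae measurableSet_Ioc
    filter_upwards with t ht
    rw [intervalIntegral.integral_of_le (by simp only [mem_Ioc] at ht; linarith [ht.1]),
      integral_Ioc_eq_integral_Ioo]
  rw [hL, hR]
  exact swap_core a x ha0 hx2a q hqInt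
end

section
/- Fix a ∈ (0, π) and a function q : ℝ → ℂ, square-integrable on (0, π), with q(x) = 0 for all x outside (a, π). Fix ρ ∈ ℂ, ρ ≠ 0, λ = ρ². For ν ∈ {0,1} let y_{0,0}(x,λ) = cos(ρx), y_{1,0}(x,λ) = sin(ρx)/ρ, y_{ν,1}(x,λ) = ∫_a^x (sin ρ(x−t)/ρ) q(t) y_{ν,0}(t−a, λ) dt, and ω(x) = ∫_a^x q(t) dt. Then for every ν ∈ {0,1} and every x ∈ (a, π), the function x ↦ y_{ν,1}(x,λ) is differentiable at x with derivative (ω(x)/2) y_{ν,0}(x−a, λ) + ((−1)^ν/2) ∫_a^x q(t) y_{ν,0}(x−2t+a, λ) dt. -/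
open MeasureTheory Set
open scoped Real

section helpers

open Asymptotics Filter

lemma mynorm_cos_le (z : ℂ) : ‖Complex.cos z‖ ≤ Real.exp ‖z‖ := by
  rw [Complex.cos]
  have h1 : ‖Complex.exp (z * Complex.I)‖ ≤ Real.exp ‖z‖ := by
    rw [Complex.norm_exp]
    exact Real.exp_le_exp.2 ((Complex.re_le_norm _).trans (by simp))
  have h2 : ‖Complex.exp (-z * Complex.I)‖ ≤ Real.exp ‖z‖ := by
    rw [Complex.norm_exp]
    exact Real.exp_le_exp.2 ((Complex.re_le_norm _).trans (by simp))
  calc ‖(Complex.exp (z * Complex.I) + Complex.exp (-z * Complex.I)) / 2‖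
      ≤ (‖Complex.exp (z * Complex.I)‖ + ‖Complex.exp (-z * Complex.I)‖) / 2 := by
        rw [norm_div, show ‖(2:ℂ)‖ = 2 by norm_num]
        gcongr
        exact norm_add_le _ _
    _ ≤ (Real.exp ‖z‖ + Real.exp ‖z‖) / 2 := by gcongr
    _ = Real.exp ‖z‖ := by ring

lemma mynorm_sin_le (z : ℂ) : ‖Complex.sin z‖ ≤ Real.exp ‖z‖ := by
  rw [Complex.sin]
  have h1 : ‖Complex.exp (z * Complex.I)‖ ≤ Real.exp ‖z‖ := by
    rw [Complex.norm_exp]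
    exact Real.exp_le_exp.2 ((Complex.re_le_norm _).trans (by simp))
  have h2 : ‖Complex.exp (-z * Complex.I)‖ ≤ Real.exp ‖z‖ := by
    rw [Complex.norm_exp]
    exact Real.exp_le_exp.2 ((Complex.re_le_norm _).trans (by simp))
  calc ‖(Complex.exp (-z * Complex.I) - Complex.exp (z * Complex.I)) * Complex.I / 2‖
      ≤ (‖Complex.exp (-z * Complex.I)‖ + ‖Complex.exp (z * Complex.I)‖) / 2 := by
        rw [norm_div, norm_mul, Complex.norm_I, mul_one, show ‖(2:ℂ)‖ = 2 by norm_num]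
        gcongr
        exact norm_sub_le _ _
    _ ≤ (Real.exp ‖z‖ + Real.exp ‖z‖) / 2 := by gcongr
    _ = Real.exp ‖z‖ := by ring

lemma mynorm_sin_le_mul {R : ℝ} (z : ℂ) (hz : ‖z‖ ≤ R) :
    ‖Complex.sin z‖ ≤ Real.exp R * ‖z‖ := by
  have h := (convex_closedBall (0:ℂ) R).norm_image_sub_le_of_norm_hasDerivWithin_le
    (f := Complex.sin) (f' := Complex.cos)
    (fun w _ => (Complex.hasDerivAt_sin w).hasDerivWithinAt)
    (fun w hw => (mynorm_cos_le w).trans (Real.exp_le_exp.2 (by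
      simpa [Metric.mem_closedBall, dist_eq_norm] using hw)))
    (by simpa [Metric.mem_closedBall, dist_eq_norm] using hz)
    (Metric.mem_closedBall_self (le_trans (norm_nonneg z) hz))
  simpa using h

lemma trig0 (ρ s t a : ℂ) :
    2 * (Complex.sin (ρ*(s-t)) * Complex.cos (ρ*(t-a))) =
      Complex.sin (ρ*(s-a)) + (Complex.sin (ρ*(s+a)) * Complex.cos (2*ρ*t)
        - Complex.cos (ρ*(s+a)) * Complex.sin (2*ρ*t)) := by
  have h1 : ρ*(s-t) = ρ*s - ρ*t := by ring
  have h2 : ρ*(t-a) = ρ*t - ρ*a := by ring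
  have h3 : ρ*(s-a) = ρ*s - ρ*a := by ring
  have h4 : ρ*(s+a) = ρ*s + ρ*a := by ring
  have h5 : 2*ρ*t = ρ*t + ρ*t := by ring
  rw [h1, h2, h3, h4, h5]
  simp only [Complex.sin_add, Complex.cos_add, Complex.sin_sub, Complex.cos_sub]
  linear_combination (Complex.sin (ρ*s) * Complex.cos (ρ*a) - Complex.cos (ρ*s) * Complex.sin (ρ*a)) * Complex.sin_sq_add_cos_sq (ρ*t)

lemma trig1 (ρ s t a : ℂ) :
    2 * (Complex.sin (ρ*(s-t)) * Complex.sin (ρ*(t-a))) =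
      (Complex.cos (ρ*(s+a)) * Complex.cos (2*ρ*t)
        + Complex.sin (ρ*(s+a)) * Complex.sin (2*ρ*t)) - Complex.cos (ρ*(s-a)) := by
  have h1 : ρ*(s-t) = ρ*s - ρ*t := by ring
  have h2 : ρ*(t-a) = ρ*t - ρ*a := by ring
  have h3 : ρ*(s-a) = ρ*s - ρ*a := by ring
  have h4 : ρ*(s+a) = ρ*s + ρ*a := by ring
  have h5 : 2*ρ*t = ρ*t + ρ*t := by ring
  rw [h1, h2, h3, h4, h5]
  simp only [Complex.sin_add, Complex.cos_add, Complex.sin_sub, Complex.cos_sub]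
  linear_combination (- Complex.sin (ρ*s) * Complex.sin (ρ*a) - Complex.cos (ρ*s) * Complex.cos (ρ*a)) * Complex.sin_sq_add_cos_sq (ρ*t)

lemma key_deriv (q : ℝ → ℂ) (hq : Integrable q) (a x : ℝ)
    (A g : Fin 3 → ℝ → ℂ) (A' : Fin 3 → ℂ)
    (hA : ∀ i, HasDerivAt (A i) (A' i) x)
    (hg : ∀ i, Continuous (g i))
    (L : ℝ) (hL0 : 0 ≤ L)
    (hL : ∀ s t : ℝ, |s - x| ≤ 1 → |t - x| ≤ 1 →
      ‖∑ i, A i s * g i t‖ ≤ L * |s - t|) :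
    HasDerivAt (fun s => ∫ t in a..s, q t * ∑ i, A i s * g i t)
      (∑ i, A' i * ∫ t in a..x, q t * g i t) x := by
  have hqint : ∀ u v : ℝ, IntervalIntegrable q volume u v := fun u v => hq.intervalIntegrable
  have hqi : ∀ (i : Fin 3) (u v : ℝ), IntervalIntegrable (fun t => q t * g i t) volume u v :=
    fun i u v => (hqint u v).mul_continuousOn (hg i).continuousOn
  set B : Fin 3 → ℝ → ℂ := fun i s => ∫ t in a..s, q t * g i t with hB
  have hsplit : ∀ u s : ℝ, (∫ t in u..s, q t * ∑ i, A i s * g i t)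
      = ∑ i, A i s * ∫ t in u..s, q t * g i t := by
    intro u s
    have h1 : ∀ t ∈ uIcc u s, q t * ∑ i, A i s * g i t
        = ∑ i, A i s * (q t * g i t) := by
      intro t _
      rw [Finset.mul_sum]
      exact Finset.sum_congr rfl fun i _ => by ring
    rw [intervalIntegral.integral_congr h1,
      intervalIntegral.integral_finset_sum (fun i _ => (hqi i u s).const_mul (A i s))]
    exact Finset.sum_congr rfl fun i _ => intervalIntegral.integral_const_mul _ _
  rw [hasDerivAt_iff_isLittleO]
  have hkeyeq : ∀ s : ℝ,
      (∫ t in a..s, q t * ∑ i, A i s * g i t) - (∫ t in a..x, q t * ∑ i, A i x * g i t)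
        - (s - x) • (∑ i, A' i * B i x)
      = (∫ t in x..s, q t * ∑ i, A i s * g i t)
        + ∑ i, (A i s - A i x - (s - x) • A' i) * B i x := by
    intro s
    rw [hsplit a s, hsplit a x, hsplit x s]
    have hBsub : ∀ i : Fin 3, (∫ t in x..s, q t * g i t) = B i s - B i x := by
      intro i
      rw [hB]
      exact (intervalIntegral.integral_interval_sub_left (hqi i a s) (hqi i a x)).symm
    simp only [hBsub]
    rw [Finset.smul_sum, ← Finset.sum_sub_distrib, ← Finset.sum_sub_distrib, ← Finset.sum_add_distrib]
    refine Finset.sum_congr rfl fun i _ => ?_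
    simp only [smul_eq_mul, Complex.real_smul]
    ring
  have h2 : (fun s => ∑ i, (A i s - A i x - (s - x) • A' i) * B i x)
      =o[nhds x] fun s => s - x := by
    refine Asymptotics.IsLittleO.fun_sum fun i _ => ?_
    have := (hasDerivAt_iff_isLittleO.1 (hA i)).mul_isBigO
      (isBigO_const_const (B i x) (one_ne_zero (α := ℝ)) (nhds x))
    simpa using this
  have hEcont : Tendsto (fun s => |∫ t in x..s, ‖q t‖|) (nhds x) (nhds 0) := by
    have hc : Continuous (fun s => ∫ t in x..s, ‖q t‖) :=
      intervalIntegral.continuous_primitive (fun u v => hq.norm.intervalIntegrable) x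
    have h00 : Tendsto (fun s => ∫ t in x..s, ‖q t‖) (nhds x)
        (nhds (∫ t in x..x, ‖q t‖)) := hc.continuousAt
    have : Tendsto (fun s => ∫ t in x..s, ‖q t‖) (nhds x) (nhds 0) := by
      simpa [intervalIntegral.integral_same] using h00
    simpa using this.abs
  have h1 : (fun s => ∫ t in x..s, q t * ∑ i, A i s * g i t) =o[nhds x] fun s => s - x := by
    have hbound : ∀ᶠ s in nhds x, ‖∫ t in x..s, q t * ∑ i, A i s * g i t‖
        ≤ L * ‖(|∫ t in x..s, ‖q t‖|) * (s - x)‖ := by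
      filter_upwards [Metric.ball_mem_nhds x one_pos] with s hs
      have hsx : |s - x| ≤ 1 := by
        rw [Metric.mem_ball, Real.dist_eq] at hs; exact hs.le
      have step1 : ‖∫ t in x..s, q t * ∑ i, A i s * g i t‖
          ≤ |∫ t in x..s, (L * |s - x|) * ‖q t‖| := by
        apply intervalIntegral.norm_integral_le_abs_of_norm_le
        · filter_upwards [ae_restrict_mem measurableSet_uIoc] with t ht
          have htx : |t - x| ≤ |s - x| := by
            rcases le_total x s with h | h
            · rw [uIoc_of_le h] at ht
              rw [abs_sub_le_iff]
              constructor
              · linarith [ht.1, ht.2, abs_nonneg (s-x), le_abs_self (s-x)]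
              · linarith [ht.1, ht.2, abs_nonneg (s-x)]
            · rw [uIoc_of_ge h] at ht
              rw [abs_sub_le_iff]
              constructor
              · linarith [ht.1, ht.2, abs_nonneg (s-x)]
              · linarith [ht.1, ht.2, neg_le_abs (s-x), neg_abs_le (s-x)]
          have hts : |s - t| ≤ |s - x| := by
            rcases le_total x s with h | h
            · rw [uIoc_of_le h] at ht
              rw [abs_sub_le_iff]
              constructor
              · linarith [ht.1, ht.2, le_abs_self (s-x)]
              · linarith [ht.1, ht.2, abs_nonneg (s-x)]
            · rw [uIoc_of_ge h] at ht
              rw [abs_sub_le_iff]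
              constructor
              · linarith [ht.1, ht.2, abs_nonneg (s-x)]
              · linarith [ht.1, ht.2, neg_le_abs (s-x), neg_abs_le (s-x)]
          calc ‖q t * ∑ i, A i s * g i t‖ = ‖q t‖ * ‖∑ i, A i s * g i t‖ := norm_mul _ _
            _ ≤ ‖q t‖ * (L * |s - t|) := by
                refine mul_le_mul_of_nonneg_left (hL s t hsx (htx.trans hsx)) (norm_nonneg _)
            _ ≤ ‖q t‖ * (L * |s - x|) := by
                refine mul_le_mul_of_nonneg_left ?_ (norm_nonneg _)
                exact mul_le_mul_of_nonneg_left hts hL0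
            _ = (L * |s - x|) * ‖q t‖ := by ring
        · exact (hq.norm.intervalIntegrable).const_mul _
      calc ‖∫ t in x..s, q t * ∑ i, A i s * g i t‖
          ≤ |∫ t in x..s, (L * |s - x|) * ‖q t‖| := step1
        _ = L * (|∫ t in x..s, ‖q t‖| * |s - x|) := by
            rw [intervalIntegral.integral_const_mul, abs_mul, abs_mul,
              abs_of_nonneg hL0, abs_abs]
            ring
        _ ≤ L * ‖(|∫ t in x..s, ‖q t‖|) * (s - x)‖ := by
            rw [norm_mul, Real.norm_eq_abs, Real.norm_eq_abs, abs_abs]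
    have hlittle : (fun s => (|∫ t in x..s, ‖q t‖|) * (s - x)) =o[nhds x] fun s => s - x := by
      have hE : (fun s => (|∫ t in x..s, ‖q t‖|)) =o[nhds x] (fun _ => (1:ℝ)) :=
        (Asymptotics.isLittleO_one_iff ℝ).2 hEcont
      have := hE.mul_isBigO (Asymptotics.isBigO_refl (fun s : ℝ => s - x) (nhds x))
      simpa using this
    exact (Asymptotics.IsBigO.of_bound L hbound).trans_isLittleO hlittle
  have := h1.add h2
  refine this.congr' ?_ (by rfl)
  filter_upwards with s
  exact (hkeyeq s).symm

end helpers

theorem statement7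
    (a : ℝ) (ha : a ∈ Set.Ioo 0 π)
    (q : ℝ → ℂ)
    (hq2 : MemLp q 2 (volume.restrict (Set.Ioo 0 π)))
    (hq0 : ∀ x : ℝ, x ∉ Set.Ioo a π → q x = 0)
    (ρ : ℂ) (hρ : ρ ≠ 0) (lam : ℂ) (hlam : lam = ρ ^ 2) :
    ∀ ν : ℕ, (ν = 0 ∨ ν = 1) → ∀ x ∈ Set.Ioo a π,
      HasDerivAt (fun y => ySeq a q ρ ν 1 y)
        ((∫ t in a..x, q t) / 2 * y0 ρ ν (x - a)
          + ((-1) ^ ν / 2) * ∫ t in a..x, q t * y0 ρ ν (x - 2 * t + a)) x := by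
  -- integrability of q
  have hsub : Set.Ioo a π ⊆ Set.Ioo 0 π := fun y hy => ⟨lt_trans ha.1 hy.1, hy.2⟩
  haveI : IsFiniteMeasure (volume.restrict (Set.Ioo 0 π)) :=
    ⟨by rw [Measure.restrict_apply_univ]; exact measure_Ioo_lt_top⟩
  have hq1 : IntegrableOn q (Set.Ioo 0 π) volume :=
    memLp_one_iff_integrable.mp (hq2.mono_exponent (by norm_num))
  have hqind : q = Set.indicator (Set.Ioo 0 π) q := by
    funext y
    by_cases h : y ∈ Set.Ioo 0 π
    · simp [h]
    · simp [h, hq0 y (fun hy => h (hsub hy))]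
  have hq : Integrable q volume := by
    rw [hqind]
    exact hq1.integrable_indicator measurableSet_Ioo
  have hqint : ∀ u v : ℝ, IntervalIntegrable q volume u v := fun u v => hq.intervalIntegrable
  have hcontc : Continuous (fun t : ℝ => Complex.cos (2*ρ*(t:ℂ))) :=
    Complex.continuous_cos.comp (continuous_const.mul Complex.continuous_ofReal)
  have hconts : Continuous (fun t : ℝ => Complex.sin (2*ρ*(t:ℂ))) :=
    Complex.continuous_sin.comp (continuous_const.mul Complex.continuous_ofReal)
  rintro ν (rfl | rfl) x hx
  · -- ν = 0
    set A : Fin 3 → ℝ → ℂ :=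
      ![fun s => Complex.sin (ρ*((s:ℂ)-(a:ℂ)))/(2*ρ),
        fun s => Complex.sin (ρ*((s:ℂ)+(a:ℂ)))/(2*ρ),
        fun s => -Complex.cos (ρ*((s:ℂ)+(a:ℂ)))/(2*ρ)] with hAdef
    set g : Fin 3 → ℝ → ℂ :=
      ![fun _ => 1,
        fun t => Complex.cos (2*ρ*(t:ℂ)),
        fun t => Complex.sin (2*ρ*(t:ℂ))] with hgdef
    set A' : Fin 3 → ℂ :=
      ![Complex.cos (ρ*((x:ℂ)-(a:ℂ)))/2,
        Complex.cos (ρ*((x:ℂ)+(a:ℂ)))/2,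
        Complex.sin (ρ*((x:ℂ)+(a:ℂ)))/2] with hA'def
    have hy : ∀ z : ℝ, y0 ρ 0 z = Complex.cos (ρ*(z:ℂ)) := fun z => by simp [y0]
    have hsum : ∀ s t : ℝ, (∑ i, A i s * g i t)
        = Complex.sin (ρ*((s:ℂ)-(t:ℂ)))/ρ * Complex.cos (ρ*((t:ℂ)-(a:ℂ))) := by
      intro s t
      rw [Fin.sum_univ_three]
      simp only [hAdef, hgdef, Matrix.cons_val_zero, Matrix.cons_val_one, Matrix.head_cons,
        Matrix.cons_val_two, Matrix.tail_cons]
      have h := trig0 ρ (s:ℂ) (t:ℂ) (a:ℂ)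
      linear_combination (-1/(2*ρ)) * h
    have hA : ∀ i, HasDerivAt (A i) (A' i) x := by
      intro i
      fin_cases i
      · have h : HasDerivAt (fun z : ℂ => Complex.sin (ρ*(z-(a:ℂ)))/(2*ρ))
            (Complex.cos (ρ*((x:ℂ)-(a:ℂ))) * (ρ * 1) / (2*ρ)) (x:ℂ) :=
          ((((hasDerivAt_id ((x:ℂ))).sub_const (a:ℂ)).const_mul ρ).csin).div_const (2*ρ)
        have h2 := h.comp_ofReal
        convert h2 using 1
        · exact rfl
        simp only [hA'def, Fin.reduceFinMk, Fin.isValue, Matrix.cons_val_zero, Matrix.cons_val_one, Matrix.head_cons,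
          Matrix.cons_val_two, Matrix.tail_cons]
        field_simp
        try ring
      · have h : HasDerivAt (fun z : ℂ => Complex.sin (ρ*(z+(a:ℂ)))/(2*ρ))
            (Complex.cos (ρ*((x:ℂ)+(a:ℂ))) * (ρ * 1) / (2*ρ)) (x:ℂ) :=
          ((((hasDerivAt_id ((x:ℂ))).add_const (a:ℂ)).const_mul ρ).csin).div_const (2*ρ)
        have h2 := h.comp_ofReal
        convert h2 using 1
        · exact rfl
        simp only [hA'def, Fin.reduceFinMk, Fin.isValue, Matrix.cons_val_zero, Matrix.cons_val_one, Matrix.head_cons,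
          Matrix.cons_val_two, Matrix.tail_cons]
        field_simp
        try ring
      · have h : HasDerivAt (fun z : ℂ => -Complex.cos (ρ*(z+(a:ℂ)))/(2*ρ))
            (-(-Complex.sin (ρ*((x:ℂ)+(a:ℂ))) * (ρ * 1)) / (2*ρ)) (x:ℂ) :=
          (((((hasDerivAt_id ((x:ℂ))).add_const (a:ℂ)).const_mul ρ).ccos).neg).div_const (2*ρ)
        have h2 := h.comp_ofReal
        convert h2 using 1
        · exact rfl
        simp only [hA'def, Fin.reduceFinMk, Fin.isValue, Matrix.cons_val_zero, Matrix.cons_val_one, Matrix.head_cons,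
          Matrix.cons_val_two, Matrix.tail_cons]
        field_simp
        try ring
    have hg : ∀ i, Continuous (g i) := by
      intro i
      fin_cases i
      · simpa [hgdef] using continuous_const
      · simpa [hgdef] using hcontc
      · simpa [hgdef] using hconts
    set L : ℝ := Real.exp (2*‖ρ‖) * Real.exp (‖ρ‖*(1+|x|+|a|)) with hLdef
    have hρ' : (0:ℝ) < ‖ρ‖ := norm_pos_iff.2 hρ
    have hL0 : 0 ≤ L := le_of_lt (by positivity)
    have hL : ∀ s t : ℝ, |s - x| ≤ 1 → |t - x| ≤ 1 →
        ‖∑ i, A i s * g i t‖ ≤ L * |s - t| := by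
      intro s t hs ht
      rw [hsum s t]
      have hst : ‖ρ * ((s:ℂ)-(t:ℂ))‖ ≤ 2*‖ρ‖ := by
        rw [norm_mul]
        have : ‖((s:ℂ)-(t:ℂ))‖ = |s - t| := by
          rw [← Complex.ofReal_sub, Complex.norm_real, Real.norm_eq_abs]
        rw [this]
        have : |s - t| ≤ 2 := by
          have := abs_sub_abs_le_abs_sub s t
          calc |s - t| = |(s - x) - (t - x)| := by ring_nf
            _ ≤ |s - x| + |t - x| := abs_sub _ _
            _ ≤ 2 := by linarith
        calc ‖ρ‖ * |s - t| ≤ ‖ρ‖ * 2 := by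
              exact mul_le_mul_of_nonneg_left this (norm_nonneg ρ)
          _ = 2*‖ρ‖ := by ring
      have hsin : ‖Complex.sin (ρ*((s:ℂ)-(t:ℂ)))‖ ≤ Real.exp (2*‖ρ‖) * (‖ρ‖ * |s-t|) := by
        have := mynorm_sin_le_mul (R := 2*‖ρ‖) (ρ*((s:ℂ)-(t:ℂ))) hst
        rw [norm_mul] at this
        have he : ‖((s:ℂ)-(t:ℂ))‖ = |s - t| := by
          rw [← Complex.ofReal_sub, Complex.norm_real, Real.norm_eq_abs]
        rwa [he] at this
      have hcos : ‖Complex.cos (ρ*((t:ℂ)-(a:ℂ)))‖ ≤ Real.exp (‖ρ‖*(1+|x|+|a|)) := by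
        refine (mynorm_cos_le _).trans (Real.exp_le_exp.2 ?_)
        rw [norm_mul]
        have he : ‖((t:ℂ)-(a:ℂ))‖ = |t - a| := by
          rw [← Complex.ofReal_sub, Complex.norm_real, Real.norm_eq_abs]
        rw [he]
        have : |t - a| ≤ 1 + |x| + |a| := by
          have h1 : |t| ≤ |x| + 1 := by
            have := abs_sub_abs_le_abs_sub t x
            linarith [abs_sub_abs_le_abs_sub t x, ht]
          calc |t - a| ≤ |t| + |a| := abs_sub _ _
            _ ≤ 1 + |x| + |a| := by linarith
        exact mul_le_mul_of_nonneg_left this (norm_nonneg ρ)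
      rw [norm_mul, norm_div]
      rcases eq_or_ne s t with rfl | hst'
      · simp
      calc ‖Complex.sin (ρ*((s:ℂ)-(t:ℂ)))‖ / ‖ρ‖ * ‖Complex.cos (ρ*((t:ℂ)-(a:ℂ)))‖
          ≤ (Real.exp (2*‖ρ‖) * (‖ρ‖ * |s-t|)) / ‖ρ‖ * Real.exp (‖ρ‖*(1+|x|+|a|)) := by
            gcongr
        _ = L * |s - t| := by
            rw [hLdef]
            have habs : ‖ρ‖ ≠ 0 := by simpa using hρ
            field_simp [habs]
            try ring
    have hfun : (fun y => ySeq a q ρ 0 1 y)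
        = (fun s => ∫ t in a..s, q t * ∑ i, A i s * g i t) := by
      funext s
      show (∫ t in a..s, (Complex.sin (ρ * ((s - t : ℝ) : ℂ)) / ρ) * q t * ySeq a q ρ 0 0 (t - a)) = _
      refine intervalIntegral.integral_congr fun t _ => ?_
      show (Complex.sin (ρ * ((s - t : ℝ) : ℂ)) / ρ) * q t * y0 ρ 0 (t - a) = _
      rw [hsum s t, hy]
      push_cast
      ring
    rw [hfun]
    have hD := key_deriv q hq a x A g A' hA hg L hL0 hL
    convert hD using 1
    rw [Fin.sum_univ_three]
    simp only [hA'def, hgdef, Matrix.cons_val_zero, Matrix.cons_val_one, Matrix.head_cons,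
      Matrix.cons_val_two, Matrix.tail_cons]
    have e1 : (∫ t in a..x, q t * (1:ℂ)) = ∫ t in a..x, q t := by
      refine intervalIntegral.integral_congr fun t _ => mul_one _
    have e2 : (∫ t in a..x, q t * y0 ρ 0 (x - 2*t + a))
        = Complex.cos (ρ*((x:ℂ)+(a:ℂ))) * (∫ t in a..x, q t * Complex.cos (2*ρ*(t:ℂ)))
          + Complex.sin (ρ*((x:ℂ)+(a:ℂ))) * (∫ t in a..x, q t * Complex.sin (2*ρ*(t:ℂ))) := by
      have hi2 : IntervalIntegrable (fun t => q t * Complex.cos (2*ρ*(t:ℂ))) volume a x :=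
        (hqint a x).mul_continuousOn hcontc.continuousOn
      have hi3 : IntervalIntegrable (fun t => q t * Complex.sin (2*ρ*(t:ℂ))) volume a x :=
        (hqint a x).mul_continuousOn hconts.continuousOn
      rw [← intervalIntegral.integral_const_mul, ← intervalIntegral.integral_const_mul,
        ← intervalIntegral.integral_add (hi2.const_mul _) (hi3.const_mul _)]
      refine intervalIntegral.integral_congr fun t _ => ?_
      rw [hy]
      have harg : ρ * ((x - 2*t + a : ℝ) : ℂ) = ρ*((x:ℂ)+(a:ℂ)) - 2*ρ*(t:ℂ) := by
        push_cast; ring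
      rw [harg, Complex.cos_sub]
      ring
    rw [e1, e2, hy]
    simp only [pow_zero]
    push_cast
    ring
  · -- ν = 1
    set A : Fin 3 → ℝ → ℂ :=
      ![fun s => -Complex.cos (ρ*((s:ℂ)-(a:ℂ)))/(2*ρ^2),
        fun s => Complex.cos (ρ*((s:ℂ)+(a:ℂ)))/(2*ρ^2),
        fun s => Complex.sin (ρ*((s:ℂ)+(a:ℂ)))/(2*ρ^2)] with hAdef
    set g : Fin 3 → ℝ → ℂ :=
      ![fun _ => 1,
        fun t => Complex.cos (2*ρ*(t:ℂ)),
        fun t => Complex.sin (2*ρ*(t:ℂ))] with hgdef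
    set A' : Fin 3 → ℂ :=
      ![Complex.sin (ρ*((x:ℂ)-(a:ℂ)))/(2*ρ),
        -Complex.sin (ρ*((x:ℂ)+(a:ℂ)))/(2*ρ),
        Complex.cos (ρ*((x:ℂ)+(a:ℂ)))/(2*ρ)] with hA'def
    have hy : ∀ z : ℝ, y0 ρ 1 z = Complex.sin (ρ*(z:ℂ))/ρ := fun z => by simp [y0]
    have hsum : ∀ s t : ℝ, (∑ i, A i s * g i t)
        = Complex.sin (ρ*((s:ℂ)-(t:ℂ)))/ρ * (Complex.sin (ρ*((t:ℂ)-(a:ℂ)))/ρ) := by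
      intro s t
      rw [Fin.sum_univ_three]
      simp only [hAdef, hgdef, Matrix.cons_val_zero, Matrix.cons_val_one, Matrix.head_cons,
        Matrix.cons_val_two, Matrix.tail_cons]
      have h := trig1 ρ (s:ℂ) (t:ℂ) (a:ℂ)
      linear_combination (-1/(2*ρ^2)) * h
    have hA : ∀ i, HasDerivAt (A i) (A' i) x := by
      intro i
      fin_cases i
      · have h : HasDerivAt (fun z : ℂ => -Complex.cos (ρ*(z-(a:ℂ)))/(2*ρ^2))
            (-(-Complex.sin (ρ*((x:ℂ)-(a:ℂ))) * (ρ * 1)) / (2*ρ^2)) (x:ℂ) :=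
          (((((hasDerivAt_id ((x:ℂ))).sub_const (a:ℂ)).const_mul ρ).ccos).neg).div_const (2*ρ^2)
        have h2 := h.comp_ofReal
        convert h2 using 1
        · exact rfl
        simp only [hA'def, Fin.reduceFinMk, Fin.isValue, Matrix.cons_val_zero, Matrix.cons_val_one, Matrix.head_cons,
          Matrix.cons_val_two, Matrix.tail_cons]
        field_simp
        try ring
      · have h : HasDerivAt (fun z : ℂ => Complex.cos (ρ*(z+(a:ℂ)))/(2*ρ^2))
            ((-Complex.sin (ρ*((x:ℂ)+(a:ℂ))) * (ρ * 1)) / (2*ρ^2)) (x:ℂ) :=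
          ((((hasDerivAt_id ((x:ℂ))).add_const (a:ℂ)).const_mul ρ).ccos).div_const (2*ρ^2)
        have h2 := h.comp_ofReal
        convert h2 using 1
        · exact rfl
        simp only [hA'def, Fin.reduceFinMk, Fin.isValue, Matrix.cons_val_zero, Matrix.cons_val_one, Matrix.head_cons,
          Matrix.cons_val_two, Matrix.tail_cons]
        field_simp
        try ring
      · have h : HasDerivAt (fun z : ℂ => Complex.sin (ρ*(z+(a:ℂ)))/(2*ρ^2))
            (Complex.cos (ρ*((x:ℂ)+(a:ℂ))) * (ρ * 1) / (2*ρ^2)) (x:ℂ) :=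
          ((((hasDerivAt_id ((x:ℂ))).add_const (a:ℂ)).const_mul ρ).csin).div_const (2*ρ^2)
        have h2 := h.comp_ofReal
        convert h2 using 1
        · exact rfl
        simp only [hA'def, Fin.reduceFinMk, Fin.isValue, Matrix.cons_val_zero, Matrix.cons_val_one, Matrix.head_cons,
          Matrix.cons_val_two, Matrix.tail_cons]
        field_simp
        try ring
    have hg : ∀ i, Continuous (g i) := by
      intro i
      fin_cases i
      · simpa [hgdef] using continuous_const
      · simpa [hgdef] using hcontc
      · simpa [hgdef] using hconts
    set L : ℝ := Real.exp (2*‖ρ‖) * (Real.exp (‖ρ‖*(1+|x|+|a|)) / ‖ρ‖) with hLdef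
    have hρ' : (0:ℝ) < ‖ρ‖ := norm_pos_iff.2 hρ
    have hL0 : 0 ≤ L := le_of_lt (by positivity)
    have hL : ∀ s t : ℝ, |s - x| ≤ 1 → |t - x| ≤ 1 →
        ‖∑ i, A i s * g i t‖ ≤ L * |s - t| := by
      intro s t hs ht
      rw [hsum s t]
      have hst : ‖ρ * ((s:ℂ)-(t:ℂ))‖ ≤ 2*‖ρ‖ := by
        rw [norm_mul]
        have : ‖((s:ℂ)-(t:ℂ))‖ = |s - t| := by
          rw [← Complex.ofReal_sub, Complex.norm_real, Real.norm_eq_abs]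
        rw [this]
        have : |s - t| ≤ 2 := by
          calc |s - t| = |(s - x) - (t - x)| := by ring_nf
            _ ≤ |s - x| + |t - x| := abs_sub _ _
            _ ≤ 2 := by linarith
        calc ‖ρ‖ * |s - t| ≤ ‖ρ‖ * 2 := by
              exact mul_le_mul_of_nonneg_left this (norm_nonneg ρ)
          _ = 2*‖ρ‖ := by ring
      have hsin : ‖Complex.sin (ρ*((s:ℂ)-(t:ℂ)))‖ ≤ Real.exp (2*‖ρ‖) * (‖ρ‖ * |s-t|) := by
        have := mynorm_sin_le_mul (R := 2*‖ρ‖) (ρ*((s:ℂ)-(t:ℂ))) hst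
        rw [norm_mul] at this
        have he : ‖((s:ℂ)-(t:ℂ))‖ = |s - t| := by
          rw [← Complex.ofReal_sub, Complex.norm_real, Real.norm_eq_abs]
        rwa [he] at this
      have hsin2 : ‖Complex.sin (ρ*((t:ℂ)-(a:ℂ)))‖ ≤ Real.exp (‖ρ‖*(1+|x|+|a|)) := by
        refine (mynorm_sin_le _).trans (Real.exp_le_exp.2 ?_)
        rw [norm_mul]
        have he : ‖((t:ℂ)-(a:ℂ))‖ = |t - a| := by
          rw [← Complex.ofReal_sub, Complex.norm_real, Real.norm_eq_abs]
        rw [he]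
        have : |t - a| ≤ 1 + |x| + |a| := by
          have h1 : |t| ≤ |x| + 1 := by
            linarith [abs_sub_abs_le_abs_sub t x, ht]
          calc |t - a| ≤ |t| + |a| := abs_sub _ _
            _ ≤ 1 + |x| + |a| := by linarith
        exact mul_le_mul_of_nonneg_left this (norm_nonneg ρ)
      rw [norm_mul, norm_div, norm_div]
      calc ‖Complex.sin (ρ*((s:ℂ)-(t:ℂ)))‖ / ‖ρ‖ * (‖Complex.sin (ρ*((t:ℂ)-(a:ℂ)))‖ / ‖ρ‖)
          ≤ (Real.exp (2*‖ρ‖) * (‖ρ‖ * |s-t|)) / ‖ρ‖ * (Real.exp (‖ρ‖*(1+|x|+|a|)) / ‖ρ‖) := by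
            gcongr
        _ = L * |s - t| := by
            rw [hLdef]
            have habs : ‖ρ‖ ≠ 0 := by simpa using hρ
            field_simp [habs]
            try ring
    have hfun : (fun y => ySeq a q ρ 1 1 y)
        = (fun s => ∫ t in a..s, q t * ∑ i, A i s * g i t) := by
      funext s
      show (∫ t in a..s, (Complex.sin (ρ * ((s - t : ℝ) : ℂ)) / ρ) * q t * ySeq a q ρ 1 0 (t - a)) = _
      refine intervalIntegral.integral_congr fun t _ => ?_
      show (Complex.sin (ρ * ((s - t : ℝ) : ℂ)) / ρ) * q t * y0 ρ 1 (t - a) = _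
      rw [hsum s t, hy]
      push_cast
      ring
    rw [hfun]
    have hD := key_deriv q hq a x A g A' hA hg L hL0 hL
    convert hD using 1
    rw [Fin.sum_univ_three]
    simp only [hA'def, hgdef, Matrix.cons_val_zero, Matrix.cons_val_one, Matrix.head_cons,
      Matrix.cons_val_two, Matrix.tail_cons]
    have e1 : (∫ t in a..x, q t * (1:ℂ)) = ∫ t in a..x, q t := by
      refine intervalIntegral.integral_congr fun t _ => mul_one _
    have e2 : (∫ t in a..x, q t * y0 ρ 1 (x - 2*t + a))
        = (Complex.sin (ρ*((x:ℂ)+(a:ℂ)))/ρ) * (∫ t in a..x, q t * Complex.cos (2*ρ*(t:ℂ)))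
          - (Complex.cos (ρ*((x:ℂ)+(a:ℂ)))/ρ) * (∫ t in a..x, q t * Complex.sin (2*ρ*(t:ℂ))) := by
      have hi2 : IntervalIntegrable (fun t => q t * Complex.cos (2*ρ*(t:ℂ))) volume a x :=
        (hqint a x).mul_continuousOn hcontc.continuousOn
      have hi3 : IntervalIntegrable (fun t => q t * Complex.sin (2*ρ*(t:ℂ))) volume a x :=
        (hqint a x).mul_continuousOn hconts.continuousOn
      rw [← intervalIntegral.integral_const_mul, ← intervalIntegral.integral_const_mul,
        ← intervalIntegral.integral_sub (hi2.const_mul _) (hi3.const_mul _)]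
      refine intervalIntegral.integral_congr fun t _ => ?_
      rw [hy]
      have harg : ρ * ((x - 2*t + a : ℝ) : ℂ) = ρ*((x:ℂ)+(a:ℂ)) - 2*ρ*(t:ℂ) := by
        push_cast; ring
      rw [harg, Complex.sin_sub]
      ring
    rw [e1, e2, hy]
    simp only [pow_one]
    push_cast
    ring
end
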